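/- arXiv:1511.08528 — 8 statements merged into one kernel-verified Lean document; each statement's English description precedes it below -/
import Mathlib

section
/- Let x ∈ ℝ^d be a fixed vector and ε ∈ (0,1). Let Ω ∈ ℝ^{r×d} be a random matrix whose entries are independent standard normal N(0,1) random variables. Then P( (1−ε)‖x‖₂² ≤ ‖(1/√r)·Ωx‖₂² ≤ (1+ε)‖x‖₂² ) ≥ 1 − 2·exp(−(ε²−ε³)r/4). -/
open MeasureTheory ProbabilityTheory Real
open scoped ENNReal

/-- The law of an `r × d` random matrix with independent standard normal
`N(0,1)` entries: the product Gaussian measure on `Fin r → Fin d → ℝ`. -/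
noncomputable def gaussMatrix (r d : ℕ) : Measure (Fin r → Fin d → ℝ) :=
  Measure.pi fun _ : Fin r => Measure.pi fun _ : Fin d => gaussianReal 0 1

instance gaussMatrixIsProb (r d : ℕ) : IsProbabilityMeasure (gaussMatrix r d) := by
  unfold gaussMatrix; infer_instance

lemma keyA (a s t : ℝ) (h : 2 * t * a ^ 2 < 1) :
    ∀ x : ℝ, gaussianPDFReal 0 1 x * Real.exp (t * (a * x + s) ^ 2) =
      ((Real.sqrt (2 * π))⁻¹ * Real.exp (t * s ^ 2 / (2 * (1 / 2 - t * a ^ 2)))) *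
        Real.exp (-(1 / 2 - t * a ^ 2) * (x - t * a * s / (1 / 2 - t * a ^ 2)) ^ 2) := by
  have hc : (0:ℝ) < 1 / 2 - t * a ^ 2 := by linarith
  have hc0 : (1 / 2 - t * a ^ 2 : ℝ) ≠ 0 := ne_of_gt hc
  intro x
  rw [gaussianPDFReal]
  push_cast
  rw [show (2 * π * 1) = 2 * π by ring, mul_assoc, mul_assoc, ← Real.exp_add, ← Real.exp_add]
  congr 1
  have hc1 : (1 - t * a ^ 2 * 2 : ℝ) ≠ 0 := fun h' => hc0 (by linarith)
  have hinv : (1 - t * a ^ 2 * 2) * (1 - t * a ^ 2 * 2 : ℝ)⁻¹ = 1 := mul_inv_cancel₀ hc1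
  rw [Real.exp_eq_exp]
  have hc1' : (1 - 2 * t * a ^ 2 : ℝ) ≠ 0 := fun h' => hc0 (by linarith)
  field_simp
  ring

lemma intA (a s t : ℝ) (h : 2 * t * a ^ 2 < 1) :
    Integrable (fun x : ℝ => gaussianPDFReal 0 1 x * Real.exp (t * (a * x + s) ^ 2)) := by
  have hc : (0:ℝ) < 1 / 2 - t * a ^ 2 := by linarith
  have h1 : Integrable (fun x : ℝ => Real.exp (-(1 / 2 - t * a ^ 2) * x ^ 2)) :=
    integrable_exp_neg_mul_sq hc
  have h2 := (h1.comp_sub_right (t * a * s / (1 / 2 - t * a ^ 2))).const_mul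
      ((Real.sqrt (2 * π))⁻¹ * Real.exp (t * s ^ 2 / (2 * (1 / 2 - t * a ^ 2))))
  exact h2.congr (Filter.Eventually.of_forall fun x => (keyA a s t h x).symm)

lemma realA (a s t : ℝ) (h : 2 * t * a ^ 2 < 1) :
    ∫ x : ℝ, gaussianPDFReal 0 1 x * Real.exp (t * (a * x + s) ^ 2) =
      (Real.sqrt (1 - 2 * t * a ^ 2))⁻¹ * Real.exp (t * s ^ 2 / (1 - 2 * t * a ^ 2)) := by
  have hc : (0:ℝ) < 1 / 2 - t * a ^ 2 := by linarith
  simp_rw [keyA a s t h]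
  rw [integral_const_mul]
  set c : ℝ := 1 / 2 - t * a ^ 2 with hcdef
  have htr : ∫ x : ℝ, Real.exp (-c * (x - t * a * s / c) ^ 2) = Real.sqrt (π / c) := by
    rw [← integral_gaussian c]
    exact integral_sub_right_eq_self (fun x => Real.exp (-c * x ^ 2)) _
  rw [htr]
  have h2c : 1 - 2 * t * a ^ 2 = 2 * c := by rw [hcdef]; ring
  rw [h2c]
  have hs : (Real.sqrt (2 * π))⁻¹ * Real.sqrt (π / c) = (Real.sqrt (2 * c))⁻¹ := by
    rw [← Real.sqrt_inv, ← Real.sqrt_mul (by positivity), ← Real.sqrt_inv,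
      show (2 * π)⁻¹ * (π / c) = (2 * c)⁻¹ by field_simp]
  calc (Real.sqrt (2*π))⁻¹ * Real.exp (t * s ^ 2 / (2*c)) * Real.sqrt (π / c)
      = ((Real.sqrt (2*π))⁻¹ * Real.sqrt (π / c)) * Real.exp (t * s ^ 2 / (2*c)) := by ring
    _ = (Real.sqrt (2*c))⁻¹ * Real.exp (t * s ^ 2 / (2*c)) := by rw [hs]

lemma lintA (a s t : ℝ) (h : 2 * t * a ^ 2 < 1) :
    ∫⁻ x : ℝ, ENNReal.ofReal (Real.exp (t * (a * x + s) ^ 2)) ∂(gaussianReal 0 1) =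
      ENNReal.ofReal ((Real.sqrt (1 - 2 * t * a ^ 2))⁻¹ *
        Real.exp (t * s ^ 2 / (1 - 2 * t * a ^ 2))) := by
  rw [gaussianReal_of_var_ne_zero 0 one_ne_zero]
  rw [lintegral_withDensity_eq_lintegral_mul _ (measurable_gaussianPDF 0 1)
    (by fun_prop)]
  have : ∀ x : ℝ, (gaussianPDF 0 1 * fun x => ENNReal.ofReal (Real.exp (t * (a * x + s) ^ 2))) x
      = ENNReal.ofReal (gaussianPDFReal 0 1 x * Real.exp (t * (a * x + s) ^ 2)) := by
    intro x
    simp only [Pi.mul_apply, gaussianPDF]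
    rw [← ENNReal.ofReal_mul (gaussianPDFReal_nonneg 0 1 x)]
  simp_rw [this]
  rw [← ofReal_integral_eq_lintegral_ofReal (intA a s t h)
    (Filter.Eventually.of_forall fun x =>
      mul_nonneg (gaussianPDFReal_nonneg 0 1 x) (Real.exp_nonneg _))]
  rw [realA a s t h]

lemma lintB : ∀ (d : ℕ) (x : Fin d → ℝ) (t s : ℝ), 2 * t * (∑ j, x j ^ 2) < 1 →
    ∫⁻ ω : Fin d → ℝ, ENNReal.ofReal (Real.exp (t * ((∑ j, x j * ω j) + s) ^ 2))
        ∂(Measure.pi fun _ => gaussianReal 0 1) =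
      ENNReal.ofReal ((Real.sqrt (1 - 2 * t * (∑ j, x j ^ 2)))⁻¹ *
        Real.exp (t * s ^ 2 / (1 - 2 * t * (∑ j, x j ^ 2)))) := by
  intro d
  induction d with
  | zero =>
    intro x t s h
    simp
  | succ d ih =>
    intro x t s h
    set σ2 : ℝ := ∑ j, x j ^ 2 with hσ2
    have hsum : σ2 = (∑ j : Fin d, x j.succ ^ 2) + x 0 ^ 2 := by
      rw [hσ2, Fin.sum_univ_succ]; ring
    set σ2' : ℝ := ∑ j : Fin d, x j.succ ^ 2 with hσ2'def
    have hw : 0 < 1 - 2 * t * σ2 := by linarith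
    have hq : (0:ℝ) ≤ x 0 ^ 2 := sq_nonneg _
    have hq' : (0:ℝ) ≤ σ2' := by rw [hσ2'def]; positivity
    have htail : 2 * t * σ2' < 1 := by
      rcases le_or_gt 0 t with ht | ht
      · nlinarith
      · nlinarith
    have hw' : 0 < 1 - 2 * t * σ2' := by linarith
    have hkey : 2 * (t / (1 - 2 * t * σ2')) * (x 0) ^ 2 < 1 := by
      have e1 : 2 * (t / (1 - 2 * t * σ2')) * x 0 ^ 2
          = (2 * t * x 0 ^ 2) / (1 - 2 * t * σ2') := by ring
      rw [e1, div_lt_one hw']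
      have h2 := h
      rw [hsum] at h2
      nlinarith [h2]
    have hx0 : 0 < 1 - 2 * (t / (1 - 2 * t * σ2')) * x 0 ^ 2 := by linarith
    have hmp := measurePreserving_piFinSuccAbove (fun _ : Fin (d+1) => gaussianReal 0 1) 0
    set e := MeasurableEquiv.piFinSuccAbove (fun _ : Fin (d+1) => ℝ) 0 with he
    have hGmeas : Measurable (fun p : ℝ × (Fin d → ℝ) =>
        ENNReal.ofReal (Real.exp (t * (x 0 * p.1 + ((∑ j : Fin d, x j.succ * p.2 j) + s)) ^ 2))) := by
      apply Measurable.ennreal_ofReal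
      apply Real.measurable_exp.comp
      apply Measurable.const_mul
      apply Measurable.pow_const
      exact ((measurable_fst.const_mul _).add
        ((Finset.measurable_sum Finset.univ fun j _ =>
          ((measurable_pi_apply j).comp measurable_snd).const_mul _).add_const s))
    have hcomp : ∀ ω : Fin (d+1) → ℝ,
        ENNReal.ofReal (Real.exp (t * ((∑ j, x j * ω j) + s) ^ 2)) =
        (fun p : ℝ × (Fin d → ℝ) =>
          ENNReal.ofReal (Real.exp (t * (x 0 * p.1 + ((∑ j : Fin d, x j.succ * p.2 j) + s)) ^ 2))) (e ω) := by
      intro ω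
      have h1 : (e ω).1 = ω 0 := rfl
      have h2 : (e ω).2 = fun j => ω j.succ := by
        funext j
        show ω ((0 : Fin (d+1)).succAbove j) = ω j.succ
        rw [Fin.succAbove_zero]
      simp only [h1, h2, Fin.sum_univ_succ]
      congr 3
      ring
    calc ∫⁻ ω : Fin (d+1) → ℝ, ENNReal.ofReal (Real.exp (t * ((∑ j, x j * ω j) + s) ^ 2))
          ∂(Measure.pi fun _ => gaussianReal 0 1)
        = ∫⁻ p, (fun p : ℝ × (Fin d → ℝ) =>
            ENNReal.ofReal (Real.exp (t * (x 0 * p.1 + ((∑ j : Fin d, x j.succ * p.2 j) + s)) ^ 2))) p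
            ∂((gaussianReal 0 1).prod (Measure.pi fun _ : Fin d => gaussianReal 0 1)) := by
          rw [← hmp.lintegral_comp hGmeas]
          exact lintegral_congr hcomp
      _ = ∫⁻ y : ℝ, ∫⁻ ω' : Fin d → ℝ,
            ENNReal.ofReal (Real.exp (t * ((∑ j : Fin d, x j.succ * ω' j) + (x 0 * y + s)) ^ 2))
            ∂(Measure.pi fun _ : Fin d => gaussianReal 0 1) ∂(gaussianReal 0 1) := by
          rw [lintegral_prod _ hGmeas.aemeasurable]
          congr 1; ext y; congr 1; ext ω'; congr 3; ring
      _ = ∫⁻ y : ℝ, ENNReal.ofReal ((Real.sqrt (1 - 2 * t * σ2'))⁻¹ *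
            Real.exp (t * (x 0 * y + s) ^ 2 / (1 - 2 * t * σ2'))) ∂(gaussianReal 0 1) := by
          congr 1; ext y
          exact ih (fun j => x j.succ) t (x 0 * y + s) htail
      _ = ENNReal.ofReal ((Real.sqrt (1 - 2 * t * σ2'))⁻¹) *
          ∫⁻ y : ℝ, ENNReal.ofReal (Real.exp ((t / (1 - 2 * t * σ2')) * (x 0 * y + s) ^ 2))
            ∂(gaussianReal 0 1) := by
          rw [← lintegral_const_mul' _ _ ENNReal.ofReal_ne_top]
          congr 1; ext y
          rw [← ENNReal.ofReal_mul (by positivity)]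
          congr 2
          ring
      _ = ENNReal.ofReal ((Real.sqrt (1 - 2 * t * σ2'))⁻¹) *
          ENNReal.ofReal ((Real.sqrt (1 - 2 * (t / (1 - 2 * t * σ2')) * x 0 ^ 2))⁻¹ *
            Real.exp ((t / (1 - 2 * t * σ2')) * s ^ 2 /
              (1 - 2 * (t / (1 - 2 * t * σ2')) * x 0 ^ 2))) := by
          rw [lintA (x 0) s (t / (1 - 2 * t * σ2')) hkey]
      _ = ENNReal.ofReal ((Real.sqrt (1 - 2 * t * σ2))⁻¹ *
            Real.exp (t * s ^ 2 / (1 - 2 * t * σ2))) := by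
          rw [← ENNReal.ofReal_mul (by positivity)]
          congr 1
          have hprod : (1 - 2 * t * σ2') * (1 - 2 * (t / (1 - 2 * t * σ2')) * x 0 ^ 2)
              = 1 - 2 * t * σ2 := by
            field_simp
            rw [hsum]
            ring
          rw [← mul_assoc, ← Real.sqrt_inv, ← Real.sqrt_inv, ← Real.sqrt_mul (by positivity),
            ← mul_inv, hprod, Real.sqrt_inv]
          congr 2
          rw [← hprod]
          field_simp [hw'.ne', hx0.ne']

lemma lintB0 (d : ℕ) (x : Fin d → ℝ) (t : ℝ) (h : 2 * t * (∑ j, x j ^ 2) < 1) :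
    ∫⁻ ω : Fin d → ℝ, ENNReal.ofReal (Real.exp (t * (∑ j, x j * ω j) ^ 2))
        ∂(Measure.pi fun _ => gaussianReal 0 1) =
      ENNReal.ofReal ((Real.sqrt (1 - 2 * t * (∑ j, x j ^ 2)))⁻¹) := by
  have := lintB d x t 0 h
  simp only [add_zero] at this
  rw [this]
  norm_num

lemma measB (d : ℕ) (x : Fin d → ℝ) (t : ℝ) :
    Measurable (fun ω : Fin d → ℝ => ENNReal.ofReal (Real.exp (t * (∑ j, x j * ω j) ^ 2))) := by
  apply Measurable.ennreal_ofReal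
  apply Real.measurable_exp.comp
  apply Measurable.const_mul
  apply Measurable.pow_const
  exact Finset.measurable_sum Finset.univ fun j _ => (measurable_pi_apply j).const_mul _

lemma lintC : ∀ (r : ℕ) (d : ℕ) (x : Fin d → ℝ) (t : ℝ), 2 * t * (∑ j, x j ^ 2) < 1 →
    ∫⁻ Ω, ENNReal.ofReal (Real.exp (t * ∑ i : Fin r, (∑ j, x j * Ω i j) ^ 2)) ∂(gaussMatrix r d)
      = ENNReal.ofReal (((Real.sqrt (1 - 2 * t * (∑ j, x j ^ 2)))⁻¹) ^ r) := by
  intro r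
  induction r with
  | zero =>
    intro d x t h
    simp [gaussMatrix]
  | succ r ih =>
    intro d x t h
    have hmp := measurePreserving_piFinSuccAbove
      (fun _ : Fin (r+1) => (Measure.pi fun _ : Fin d => gaussianReal 0 1)) 0
    set e := MeasurableEquiv.piFinSuccAbove (fun _ : Fin (r+1) => (Fin d → ℝ)) 0 with he
    set F : (Fin d → ℝ) → ℝ≥0∞ :=
      fun ω => ENNReal.ofReal (Real.exp (t * (∑ j, x j * ω j) ^ 2)) with hF
    have hFmeas : Measurable F := measB d x t
    have hHmeas : Measurable (fun Ω : Fin r → Fin d → ℝ =>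
        ENNReal.ofReal (Real.exp (t * ∑ i : Fin r, (∑ j, x j * Ω i j) ^ 2))) := by
      apply Measurable.ennreal_ofReal
      apply Real.measurable_exp.comp
      apply Measurable.const_mul
      apply Finset.measurable_sum Finset.univ fun i _ => ?_
      apply Measurable.pow_const
      apply Finset.measurable_sum Finset.univ fun j _ => ?_
      have hij : Measurable (fun Ω : Fin r → Fin d → ℝ => Ω i j) :=
        (measurable_pi_apply j).comp (measurable_pi_apply i)
      exact hij.const_mul (x j)
    have hGmeas : Measurable (fun p : (Fin d → ℝ) × (Fin r → Fin d → ℝ) =>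
        F p.1 * ENNReal.ofReal (Real.exp (t * ∑ i : Fin r, (∑ j, x j * p.2 i j) ^ 2))) :=
      (hFmeas.comp measurable_fst).mul (hHmeas.comp measurable_snd)
    have hcomp : ∀ Ω : Fin (r+1) → Fin d → ℝ,
        ENNReal.ofReal (Real.exp (t * ∑ i : Fin (r+1), (∑ j, x j * Ω i j) ^ 2)) =
        (fun p : (Fin d → ℝ) × (Fin r → Fin d → ℝ) =>
          F p.1 * ENNReal.ofReal (Real.exp (t * ∑ i : Fin r, (∑ j, x j * p.2 i j) ^ 2))) (e Ω) := by
      intro Ω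
      have h1 : (e Ω).1 = Ω 0 := rfl
      have h2 : (e Ω).2 = fun i => Ω i.succ := by
        funext i
        show Ω ((0 : Fin (r+1)).succAbove i) = Ω i.succ
        rw [Fin.succAbove_zero]
      simp only [h1, h2, Fin.sum_univ_succ, hF]
      rw [← ENNReal.ofReal_mul (Real.exp_nonneg _), ← Real.exp_add]
      congr 2
      ring
    calc ∫⁻ Ω, ENNReal.ofReal (Real.exp (t * ∑ i : Fin (r+1), (∑ j, x j * Ω i j) ^ 2))
          ∂(gaussMatrix (r+1) d)
        = ∫⁻ p, (fun p : (Fin d → ℝ) × (Fin r → Fin d → ℝ) =>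
            F p.1 * ENNReal.ofReal (Real.exp (t * ∑ i : Fin r, (∑ j, x j * p.2 i j) ^ 2))) p
            ∂((Measure.pi fun _ : Fin d => gaussianReal 0 1).prod (gaussMatrix r d)) := by
          simp only [gaussMatrix]
          rw [← hmp.lintegral_comp hGmeas]
          exact lintegral_congr hcomp
      _ = (∫⁻ ω, F ω ∂(Measure.pi fun _ : Fin d => gaussianReal 0 1)) *
          ∫⁻ Ω, ENNReal.ofReal (Real.exp (t * ∑ i : Fin r, (∑ j, x j * Ω i j) ^ 2))
            ∂(gaussMatrix r d) := by
          exact lintegral_prod_mul hFmeas.aemeasurable hHmeas.aemeasurable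
      _ = ENNReal.ofReal (((Real.sqrt (1 - 2 * t * (∑ j, x j ^ 2)))⁻¹)) *
          ENNReal.ofReal (((Real.sqrt (1 - 2 * t * (∑ j, x j ^ 2)))⁻¹) ^ r) := by
          rw [lintB0 d x t h, ih d x t h]
      _ = ENNReal.ofReal (((Real.sqrt (1 - 2 * t * (∑ j, x j ^ 2)))⁻¹) ^ (r+1)) := by
          rw [← ENNReal.ofReal_mul (by positivity)]
          congr 1
          ring

lemma logIneq1 {ε : ℝ} (hε0 : 0 < ε) (hε1 : ε < 1) :
    Real.log (1 + ε) ≤ ε - ε ^ 2 / 2 + ε ^ 3 / 2 := by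
  have h1 : (0:ℝ) < 1 + ε := by linarith
  rw [Real.log_le_iff_le_exp h1]
  have ha0 : (0:ℝ) ≤ ε - ε ^ 2 / 2 + ε ^ 3 / 2 := by nlinarith
  have h2 := Real.quadratic_le_exp_of_nonneg ha0
  nlinarith [sq_nonneg (ε - ε^2/2), sq_nonneg ε, pow_pos hε0 3, pow_pos hε0 4]

lemma logIneq2 {ε : ℝ} (hε0 : 0 < ε) (hε1 : ε < 1) :
    Real.log (1 - ε) ≤ -ε - ε ^ 2 / 2 + ε ^ 3 / 2 := by
  set f : ℝ → ℝ := fun y => -y - y ^ 2 / 2 + y ^ 3 / 2 - Real.log (1 - y) with hf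
  have hderiv : ∀ y ∈ Set.Ioo (0:ℝ) 1, HasDerivAt f (-1 - y + 3 / 2 * y ^ 2 + (1 - y)⁻¹) y := by
    intro y hy
    have hne : (1 - y : ℝ) ≠ 0 := by cases hy; intro h; linarith
    have h1 : HasDerivAt (fun y : ℝ => 1 - y) (-1) y := by
      simpa using (hasDerivAt_id y).const_sub 1
    have h2 : HasDerivAt (fun y : ℝ => Real.log (1 - y)) ((1 - y)⁻¹ * (-1)) y :=
      (Real.hasDerivAt_log hne).comp y h1
    have h3 : HasDerivAt (fun y : ℝ => -y - y ^ 2 / 2 + y ^ 3 / 2)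
        (-1 - y + 3 / 2 * y ^ 2) y := by
      have := (((hasDerivAt_id y).neg.sub (((hasDerivAt_pow 2 y)).div_const 2)).add
        ((hasDerivAt_pow 3 y).div_const 2))
      exact this.congr_deriv (by norm_num; ring)
    have := h3.sub h2
    exact this.congr_deriv (by ring)
  have hmono : MonotoneOn f (Set.Ico (0:ℝ) 1) := by
    apply monotoneOn_of_deriv_nonneg (convex_Ico 0 1)
    · apply ContinuousOn.sub
      · fun_prop
      · apply ContinuousOn.log
        · fun_prop
        · intro y hy
          cases hy
          intro h
          linarith
    · rw [interior_Ico]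
      intro y hy
      exact (hderiv y hy).differentiableAt.differentiableWithinAt
    · rw [interior_Ico]
      intro y hy
      rw [(hderiv y hy).deriv]
      obtain ⟨hy0, hy1⟩ := hy
      have h1y : 0 < 1 - y := by linarith
      have hinv : (1 - y) * (1 - y)⁻¹ = 1 := mul_inv_cancel₀ (ne_of_gt h1y)
      nlinarith [sq_nonneg y, mul_pos hy0 hy0]
  have h0 : f 0 ≤ f ε := hmono (by constructor <;> norm_num) ⟨hε0.le, hε1⟩ hε0.le
  have hf0 : f 0 = 0 := by simp [hf]
  rw [hf0, hf] at h0
  linarith [h0]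

lemma measS (r d : ℕ) (x : Fin d → ℝ) (t : ℝ) :
    Measurable (fun Ω : Fin r → Fin d → ℝ =>
      ENNReal.ofReal (Real.exp (t * ∑ i : Fin r, (∑ j, x j * Ω i j) ^ 2))) := by
  apply Measurable.ennreal_ofReal
  apply Real.measurable_exp.comp
  apply Measurable.const_mul
  apply Finset.measurable_sum Finset.univ fun i _ => ?_
  apply Measurable.pow_const
  apply Finset.measurable_sum Finset.univ fun j _ => ?_
  have hij : Measurable (fun Ω : Fin r → Fin d → ℝ => Ω i j) :=
    (measurable_pi_apply j).comp (measurable_pi_apply i)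
  exact hij.const_mul (x j)

lemma chernoff (r d : ℕ) (x : Fin d → ℝ) (t b : ℝ) (h2t : 2 * t * (∑ j, x j ^ 2) < 1)
    (E : Set (Fin r → Fin d → ℝ))
    (hE : ∀ Ω ∈ E, Real.exp (t * b) ≤ Real.exp (t * ∑ i : Fin r, (∑ j, x j * Ω i j) ^ 2)) :
    gaussMatrix r d E ≤
      ENNReal.ofReal (((Real.sqrt (1 - 2 * t * (∑ j, x j ^ 2)))⁻¹) ^ r * Real.exp (-(t * b))) := by
  set μ := gaussMatrix r d
  set f : (Fin r → Fin d → ℝ) → ℝ≥0∞ :=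
    fun Ω => ENNReal.ofReal (Real.exp (t * ∑ i : Fin r, (∑ j, x j * Ω i j) ^ 2)) with hfdef
  have hsub : E ⊆ {Ω | ENNReal.ofReal (Real.exp (t * b)) ≤ f Ω} := by
    intro Ω hΩ
    exact ENNReal.ofReal_le_ofReal (hE Ω hΩ)
  have hmarkov := mul_meas_ge_le_lintegral₀ (μ := μ) (measS r d x t).aemeasurable
    (ENNReal.ofReal (Real.exp (t * b)))
  have hint : ∫⁻ Ω, f Ω ∂μ = ENNReal.ofReal (((Real.sqrt (1 - 2 * t * (∑ j, x j ^ 2)))⁻¹) ^ r) :=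
    lintC r d x t h2t
  have hc0 : ENNReal.ofReal (Real.exp (t * b)) ≠ 0 := by
    simp [ENNReal.ofReal_eq_zero, Real.exp_pos, not_le, (Real.exp_pos _)]
  have hct : ENNReal.ofReal (Real.exp (t * b)) ≠ ⊤ := ENNReal.ofReal_ne_top
  have h1 : μ E ≤ μ {Ω | ENNReal.ofReal (Real.exp (t * b)) ≤ f Ω} := measure_mono hsub
  have h2 : μ {Ω | ENNReal.ofReal (Real.exp (t * b)) ≤ f Ω} ≤
      ENNReal.ofReal (((Real.sqrt (1 - 2 * t * (∑ j, x j ^ 2)))⁻¹) ^ r) /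
        ENNReal.ofReal (Real.exp (t * b)) := by
    rw [ENNReal.le_div_iff_mul_le (Or.inl hc0) (Or.inl hct), mul_comm]
    rw [← hint]
    exact hmarkov
  refine (h1.trans h2).trans ?_
  rw [← ENNReal.ofReal_div_of_pos (Real.exp_pos _)]
  apply ENNReal.ofReal_le_ofReal
  rw [Real.exp_neg]
  rw [div_eq_mul_inv]

lemma tail_upper (r d : ℕ) (x : Fin d → ℝ) (ε : ℝ) (hε0 : 0 < ε) (hε1 : ε < 1)
    (hσ : 0 < ∑ j, x j ^ 2) :
    gaussMatrix r d {Ω | (1 + ε) * r * (∑ j, x j ^ 2) ≤ ∑ i : Fin r, (∑ j, x j * Ω i j) ^ 2} ≤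
      ENNReal.ofReal (Real.exp (-((ε ^ 2 - ε ^ 3) * r) / 4)) := by
  set σ2 : ℝ := ∑ j, x j ^ 2 with hσ2
  set t : ℝ := ε / (2 * (1 + ε) * σ2) with htdef
  have h1ε : (0:ℝ) < 1 + ε := by linarith
  have ht : 0 < t := by rw [htdef]; positivity
  have h2tv : 2 * t * σ2 = ε / (1 + ε) := by
    rw [htdef]; field_simp
  have h2t : 2 * t * σ2 < 1 := by
    rw [h2tv, div_lt_one h1ε]; linarith
  have hb : t * ((1 + ε) * r * σ2) = ε * r / 2 := by
    rw [htdef]; field_simp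
  refine (chernoff r d x t ((1 + ε) * r * σ2) h2t _ ?_).trans ?_
  · intro Ω hΩ
    exact Real.exp_le_exp.mpr (mul_le_mul_of_nonneg_left hΩ ht.le)
  · apply ENNReal.ofReal_le_ofReal
    have hw : 1 - 2 * t * σ2 = (1 + ε)⁻¹ := by
      rw [h2tv]; field_simp; ring
    rw [hw, Real.sqrt_inv, inv_inv, hb]
    have hsq : Real.sqrt (1 + ε) = Real.exp (Real.log (1 + ε) / 2) := by
      rw [← Real.log_sqrt h1ε.le, Real.exp_log (Real.sqrt_pos.mpr h1ε)]
    rw [hsq, ← Real.exp_nat_mul, ← Real.exp_add]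
    apply Real.exp_le_exp.mpr
    have hlog := logIneq1 hε0 hε1
    have hr : (0:ℝ) ≤ (r:ℝ) := Nat.cast_nonneg r
    nlinarith [mul_le_mul_of_nonneg_left hlog hr]

lemma tail_lower (r d : ℕ) (x : Fin d → ℝ) (ε : ℝ) (hε0 : 0 < ε) (hε1 : ε < 1)
    (hσ : 0 < ∑ j, x j ^ 2) :
    gaussMatrix r d {Ω | ∑ i : Fin r, (∑ j, x j * Ω i j) ^ 2 ≤ (1 - ε) * r * (∑ j, x j ^ 2)} ≤
      ENNReal.ofReal (Real.exp (-((ε ^ 2 - ε ^ 3) * r) / 4)) := by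
  set σ2 : ℝ := ∑ j, x j ^ 2 with hσ2
  set t : ℝ := -(ε / (2 * (1 - ε) * σ2)) with htdef
  have h1ε : (0:ℝ) < 1 - ε := by linarith
  have ht : t < 0 := by rw [htdef]; simp only [neg_neg, neg_lt_zero]; positivity
  have h2tv : 2 * t * σ2 = -(ε / (1 - ε)) := by
    rw [htdef]; field_simp
  have h2t : 2 * t * σ2 < 1 := by
    rw [h2tv]
    have : 0 < ε / (1 - ε) := by positivity
    linarith
  have hb : t * ((1 - ε) * r * σ2) = -(ε * r / 2) := by
    rw [htdef]; field_simp
  refine (chernoff r d x t ((1 - ε) * r * σ2) h2t _ ?_).trans ?_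
  · intro Ω hΩ
    exact Real.exp_le_exp.mpr (mul_le_mul_of_nonpos_left hΩ ht.le)
  · apply ENNReal.ofReal_le_ofReal
    have hw : 1 - 2 * t * σ2 = (1 - ε)⁻¹ := by
      rw [h2tv]; field_simp; ring
    rw [hw, Real.sqrt_inv, inv_inv, hb, neg_neg]
    have hsq : Real.sqrt (1 - ε) = Real.exp (Real.log (1 - ε) / 2) := by
      rw [← Real.log_sqrt h1ε.le, Real.exp_log (Real.sqrt_pos.mpr h1ε)]
    rw [hsq, ← Real.exp_nat_mul, ← Real.exp_add]
    apply Real.exp_le_exp.mpr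
    have hlog := logIneq2 hε0 hε1
    have hr : (0:ℝ) ≤ (r:ℝ) := Nat.cast_nonneg r
    nlinarith [mul_le_mul_of_nonneg_left hlog hr]

/-- two-sided Johnson–Lindenstrauss bound.
For a fixed `x ∈ ℝ^d`, `ε ∈ (0,1)`, and a random `Ω ∈ ℝ^{r×d}` with iid
`N(0,1)` entries,
`P((1−ε)‖x‖₂² ≤ ‖(1/√r)Ωx‖₂² ≤ (1+ε)‖x‖₂²) ≥ 1 − 2·exp(−(ε²−ε³)r/4)`. -/
theorem stmt4 (d r : ℕ) (x : Fin d → ℝ) (ε : ℝ) (hε0 : 0 < ε) (hε1 : ε < 1) :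
    gaussMatrix r d {Ω | (1 - ε) * (∑ j, x j ^ 2) ≤
          (∑ i : Fin r, ((1 / Real.sqrt r) * ∑ j, Ω i j * x j) ^ 2) ∧
        (∑ i : Fin r, ((1 / Real.sqrt r) * ∑ j, Ω i j * x j) ^ 2) ≤
          (1 + ε) * (∑ j, x j ^ 2)} ≥
      ENNReal.ofReal (1 - 2 * Real.exp (-((ε ^ 2 - ε ^ 3) * r) / 4)) := by
  rw [ge_iff_le]
  set σ2 : ℝ := ∑ j, x j ^ 2 with hσ2
  set μ := gaussMatrix r d
  set E : Set (Fin r → Fin d → ℝ) := {Ω | (1 - ε) * σ2 ≤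
          (∑ i : Fin r, ((1 / Real.sqrt r) * ∑ j, Ω i j * x j) ^ 2) ∧
        (∑ i : Fin r, ((1 / Real.sqrt r) * ∑ j, Ω i j * x j) ^ 2) ≤ (1 + ε) * σ2} with hE
  have hσnn : 0 ≤ σ2 := by rw [hσ2]; positivity
  rcases eq_or_lt_of_le hσnn with hσ0 | hσpos
  · -- x = 0 case
    have hx : ∀ j, x j = 0 := by
      intro j
      have := (Finset.sum_eq_zero_iff_of_nonneg
        (fun j _ => sq_nonneg (x j))).mp hσ0.symm j (Finset.mem_univ j)
      exact pow_eq_zero_iff (n := 2) (by norm_num) |>.mp this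
    have hEuniv : E = Set.univ := by
      ext Ω
      have hzz : (∑ i : Fin r, ((1 / Real.sqrt r) * ∑ j, Ω i j * x j) ^ 2) = 0 :=
        Finset.sum_eq_zero fun i _ => by
          rw [show (∑ j, Ω i j * x j) = 0 from
            Finset.sum_eq_zero fun j _ => by rw [hx j, mul_zero]]
          ring
      simp only [hE, Set.mem_setOf_eq, Set.mem_univ, iff_true, hzz, ← hσ0]
      norm_num
    rw [hEuniv, measure_univ]
    apply ENNReal.ofReal_le_one.mpr
    have := Real.exp_pos (-((ε ^ 2 - ε ^ 3) * r) / 4)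
    linarith
  · rcases Nat.eq_zero_or_pos r with hr0 | hrpos
    · subst hr0
      have : ((ε ^ 2 - ε ^ 3) * (0:ℕ)) = 0 := by norm_num
      rw [show (-((ε ^ 2 - ε ^ 3) * ((0:ℕ):ℝ)) / 4) = 0 by norm_num, Real.exp_zero]
      rw [ENNReal.ofReal_eq_zero.mpr (by norm_num : (1 - 2 * 1 : ℝ) ≤ 0)]
      exact zero_le'
    · have hrR : (0:ℝ) < (r:ℝ) := Nat.cast_pos.mpr hrpos
      set S : (Fin r → Fin d → ℝ) → ℝ := fun Ω => ∑ i : Fin r, (∑ j, x j * Ω i j) ^ 2 with hS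
      have hval : ∀ Ω : Fin r → Fin d → ℝ,
          (∑ i : Fin r, ((1 / Real.sqrt r) * ∑ j, Ω i j * x j) ^ 2) = S Ω / r := by
        intro Ω
        rw [hS, Finset.sum_div]
        apply Finset.sum_congr rfl
        intro i _
        rw [mul_pow, div_pow, one_pow, Real.sq_sqrt hrR.le]
        rw [show (∑ j, Ω i j * x j) = ∑ j, x j * Ω i j from
          Finset.sum_congr rfl fun j _ => mul_comm _ _]
        ring
      set A : Set (Fin r → Fin d → ℝ) := {Ω | (1 + ε) * r * σ2 ≤ S Ω} with hA
      set B : Set (Fin r → Fin d → ℝ) := {Ω | S Ω ≤ (1 - ε) * r * σ2} with hB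
      have hcover : (Set.univ : Set (Fin r → Fin d → ℝ)) ⊆ E ∪ (A ∪ B) := by
        intro Ω _
        by_cases hΩ : Ω ∈ E
        · exact Or.inl hΩ
        · right
          simp only [hE, Set.mem_setOf_eq, not_and_or, not_le] at hΩ
          rcases hΩ with h1 | h2
          · right
            rw [hB, Set.mem_setOf_eq]
            rw [hval Ω] at h1
            rw [div_lt_iff₀ hrR] at h1
            nlinarith [h1]
          · left
            rw [hA, Set.mem_setOf_eq]
            rw [hval Ω] at h2
            rw [lt_div_iff₀ hrR] at h2
            nlinarith [h2]
      set e : ℝ := Real.exp (-((ε ^ 2 - ε ^ 3) * r) / 4) with he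
      have hAle : μ A ≤ ENNReal.ofReal e := tail_upper r d x ε hε0 hε1 hσpos
      have hBle : μ B ≤ ENNReal.ofReal e := tail_lower r d x ε hε0 hε1 hσpos
      have hone : (1:ℝ≥0∞) ≤ μ E + ENNReal.ofReal (2 * e) := by
        have h1 : (1:ℝ≥0∞) = μ Set.univ := (measure_univ (μ := μ)).symm
        rw [h1]
        refine (measure_mono hcover).trans ?_
        refine (measure_union_le _ _).trans ?_
        refine (add_le_add_right (measure_union_le _ _) _).trans ?_
        refine (add_le_add_right (add_le_add hAle hBle) _).trans ?_
        rw [← ENNReal.ofReal_add (Real.exp_nonneg _) (Real.exp_nonneg _)]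
        rw [show e + e = 2 * e by ring]
      by_cases h12 : 1 - 2 * e ≤ 0
      · rw [ENNReal.ofReal_eq_zero.mpr h12]
        exact zero_le'
      · push_neg at h12
        have h2e : (0:ℝ) ≤ 2 * e := by positivity
        have : ENNReal.ofReal (1 - 2 * e) + ENNReal.ofReal (2 * e) ≤
            μ E + ENNReal.ofReal (2 * e) := by
          rw [← ENNReal.ofReal_add (by linarith) h2e]
          rw [show (1 - 2 * e) + 2 * e = 1 by ring]
          rw [ENNReal.ofReal_one]
          exact hone
        exact (ENNReal.add_le_add_iff_right ENNReal.ofReal_ne_top).mp this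
end

section
/- Let x ∈ ℝ^d, ε ∈ (0,1), Δ ∈ (0,1), and let Ω ∈ ℝ^{r×d} have independent standard normal N(0,1) entries. If r ≥ (4/(ε²−ε³))·ln(2/Δ), then with probability at least 1−Δ the vector x satisfies the ε-JL condition under Ω, i.e. √(1−ε)·‖x‖₂ ≤ ‖(1/√r)·Ωx‖₂ ≤ √(1+ε)·‖x‖₂. -/
open MeasureTheory ProbabilityTheory Real
open scoped ENNReal NNReal

lemma onedim (s a m : ℝ) (h : 2 * s * a ^ 2 < 1) :
    ∫⁻ ω, ENNReal.ofReal (Real.exp (s * (m + a * ω) ^ 2)) ∂(gaussianReal 0 1)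
      = ENNReal.ofReal (Real.exp (s * m ^ 2 / (1 - 2 * s * a ^ 2))
          / Real.sqrt (1 - 2 * s * a ^ 2)) := by
  set β : ℝ := 1 - 2 * s * a ^ 2 with hβ
  have hβ0 : 0 < β := by linarith
  set γ : ℝ := 2 * s * a * m / β with hγ
  -- the pointwise identity
  have key : ∀ ω : ℝ, gaussianPDFReal 0 1 ω * Real.exp (s * (m + a * ω) ^ 2)
      = Real.exp (s * m ^ 2 / β) / Real.sqrt (2 * π)
        * Real.exp (-(β / 2) * (ω - γ) ^ 2) := by
    intro ω
    have h1 : (-(ω - 0) ^ 2 / (2 * (1:ℝ))) + s * (m + a * ω) ^ 2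
        = s * m ^ 2 / β + (-(β / 2) * (ω - γ) ^ 2) := by
      rw [hγ]; field_simp; ring
    rw [gaussianPDFReal]
    push_cast
    rw [mul_one, mul_assoc, ← Real.exp_add, h1, Real.exp_add, div_eq_mul_inv,
      div_eq_mul_inv]
    ring
  have hint : Integrable (fun ω => gaussianPDFReal 0 1 ω * Real.exp (s * (m + a * ω) ^ 2)) := by
    simp_rw [key]
    exact ((integrable_exp_neg_mul_sq (by linarith : (0:ℝ) < β / 2)).comp_sub_right γ).const_mul _
  have hmeas : Measurable fun ω : ℝ => Real.exp (s * (m + a * ω) ^ 2) :=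
    Real.measurable_exp.comp ((((measurable_id.const_mul a).const_add m).pow_const 2).const_mul s)
  have hpos : ∀ ω : ℝ, 0 ≤ gaussianPDFReal 0 1 ω * Real.exp (s * (m + a * ω) ^ 2) :=
    fun ω => mul_nonneg (gaussianPDFReal_nonneg 0 1 ω) (Real.exp_pos _).le
  rw [gaussianReal_of_var_ne_zero 0 one_ne_zero,
    lintegral_withDensity_eq_lintegral_mul _ (measurable_gaussianPDF 0 1) hmeas.ennreal_ofReal]
  have : ∀ ω : ℝ, gaussianPDF 0 1 ω * ENNReal.ofReal (Real.exp (s * (m + a * ω) ^ 2))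
      = ENNReal.ofReal (gaussianPDFReal 0 1 ω * Real.exp (s * (m + a * ω) ^ 2)) := by
    intro ω
    rw [gaussianPDF_def, ← ENNReal.ofReal_mul (gaussianPDFReal_nonneg 0 1 ω)]
  simp only [Pi.mul_apply]
  rw [lintegral_congr this, ← ofReal_integral_eq_lintegral_ofReal hint
    (Filter.Eventually.of_forall hpos)]
  congr 1
  calc ∫ ω, gaussianPDFReal 0 1 ω * Real.exp (s * (m + a * ω) ^ 2)
      = ∫ ω, Real.exp (s * m ^ 2 / β) / Real.sqrt (2 * π)
          * Real.exp (-(β / 2) * (ω - γ) ^ 2) := by simp_rw [key]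
    _ = Real.exp (s * m ^ 2 / β) / Real.sqrt (2 * π)
          * ∫ ω, Real.exp (-(β / 2) * (ω - γ) ^ 2) := integral_const_mul _ _
    _ = Real.exp (s * m ^ 2 / β) / Real.sqrt (2 * π) * Real.sqrt (π / (β / 2)) := by
          rw [integral_sub_right_eq_self (fun u => Real.exp (-(β / 2) * u ^ 2)) γ,
            integral_gaussian]
    _ = Real.exp (s * m ^ 2 / β) / Real.sqrt β := by
          rw [div_mul_eq_mul_div, div_eq_div_iff (by positivity) (by positivity),
            mul_assoc, ← Real.sqrt_mul (by positivity : (0:ℝ) ≤ π / (β / 2))]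
          congr 2
          field_simp

lemma log_ineq1 {y : ℝ} (h0 : 0 ≤ y) : Real.log (1 + y) ≤ y - y^2/2 + y^3/2 := by
  set f : ℝ → ℝ := fun y => y - y^2/2 + y^3/2 - Real.log (1+y) with hf
  have hder : ∀ z : ℝ, 0 ≤ z → HasDerivAt f (1 - z + 3*z^2/2 - 1/(1+z)) z := by
    intro z hz
    have h1z : (1:ℝ) + z ≠ 0 := by positivity
    have hlog : HasDerivAt (fun y : ℝ => Real.log (1+y)) (1/(1+z)) z := by
      have := (Real.hasDerivAt_log h1z).comp z ((hasDerivAt_id z).const_add 1)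
      simpa [one_div, Function.comp_def] using this
    have hpoly : HasDerivAt (fun y : ℝ => y - y^2/2 + y^3/2) (1 - z + 3*z^2/2) z := by
      have h1 : HasDerivAt (fun y : ℝ => y) 1 z := hasDerivAt_id z
      have h2 : HasDerivAt (fun y : ℝ => y^2) (2*z) z := by
        simpa using hasDerivAt_pow 2 z
      have h3 : HasDerivAt (fun y : ℝ => y^3) (3*z^2) z := by
        simpa using hasDerivAt_pow 3 z
      have := (h1.sub (h2.div_const 2)).add (h3.div_const 2)
      exact this.congr_deriv (by ring)
    exact hpoly.sub hlog
  have hmono : MonotoneOn f (Set.Ici 0) := by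
    apply monotoneOn_of_deriv_nonneg (convex_Ici 0)
    · intro z hz
      exact (hder z hz).continuousAt.continuousWithinAt
    · intro z hz
      rw [interior_Ici] at hz
      exact ((hder z (le_of_lt hz)).differentiableAt).differentiableWithinAt
    · intro z hz
      rw [interior_Ici] at hz
      have hz0 : 0 < z := hz
      rw [(hder z hz0.le).deriv]
      have h1z : (0:ℝ) < 1 + z := by linarith
      have : 1 - z + 3*z^2/2 - 1/(1+z) = (z^2/2 + 3*z^3/2)/(1+z) := by
        field_simp
        ring
      rw [this]
      positivity
  have := hmono (Set.self_mem_Ici) (Set.mem_Ici.mpr h0) h0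
  simp only [hf] at this
  norm_num at this
  linarith [this]

lemma log_ineq2 {y : ℝ} (h0 : 0 ≤ y) (h1 : y < 1) : Real.log (1 - y) ≤ -y - y^2/2 := by
  set f : ℝ → ℝ := fun y => -y - y^2/2 - Real.log (1-y) with hf
  have hder : ∀ z : ℝ, z < 1 → HasDerivAt f (-1 - z + 1/(1-z)) z := by
    intro z hz
    have h1z : (1:ℝ) - z ≠ 0 := by intro hc; linarith [hc]
    have hlog : HasDerivAt (fun y : ℝ => Real.log (1-y)) (-(1/(1-z))) z := by
      have hin : HasDerivAt (fun y : ℝ => 1 - y) (-1) z := by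
        simpa using ((hasDerivAt_id z).const_sub 1)
      have := (Real.hasDerivAt_log h1z).comp z hin
      · exact this.congr_deriv (by ring)
    have hpoly : HasDerivAt (fun y : ℝ => -y - y^2/2) (-1 - z) z := by
      have h1 : HasDerivAt (fun y : ℝ => y) 1 z := hasDerivAt_id z
      have h2 : HasDerivAt (fun y : ℝ => y^2) (2*z) z := by
        simpa using hasDerivAt_pow 2 z
      have := (h1.neg).sub (h2.div_const 2)
      exact this.congr_deriv (by ring)
    have := hpoly.sub hlog
    exact this.congr_deriv (by ring)
  have hmono : MonotoneOn f (Set.Ico 0 1) := by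
    apply monotoneOn_of_deriv_nonneg (convex_Ico 0 1)
    · intro z hz
      exact (hder z hz.2).continuousAt.continuousWithinAt
    · intro z hz
      rw [interior_Ico] at hz
      exact ((hder z hz.2).differentiableAt).differentiableWithinAt
    · intro z hz
      rw [interior_Ico] at hz
      rw [(hder z hz.2).deriv]
      have h1z : (0:ℝ) < 1 - z := by linarith [hz.2]
      have hz0 : 0 < z := hz.1
      have : -1 - z + 1/(1-z) = z^2/(1-z) := by
        field_simp
        ring
      rw [this]
      positivity
  have := hmono (Set.mem_Ico.mpr ⟨le_refl 0, one_pos⟩) (Set.mem_Ico.mpr ⟨h0, h1⟩) h0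
  simp only [hf] at this
  norm_num at this
  linarith [this]

lemma lintegral_pi_pow {α : Type*} [MeasurableSpace α] (μ : Measure α) [SigmaFinite μ]
    (f : α → ℝ≥0∞) (hf : Measurable f) : ∀ n : ℕ,
    ∫⁻ ω, ∏ i : Fin n, f (ω i) ∂(Measure.pi fun _ : Fin n => μ)
      = (∫⁻ x, f x ∂μ) ^ n := by
  intro n
  induction n with
  | zero =>
    simp [lintegral_const, Measure.pi_empty_univ]
  | succ n ih =>
    have hMP := measurePreserving_piFinSuccAbove (fun _ : Fin (n + 1) => μ) 0
    set G : α × (Fin n → α) → ℝ≥0∞ := fun p => f p.1 * ∏ j : Fin n, f (p.2 j) with hG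
    have hGmeas : Measurable G := by
      apply Measurable.mul
      · exact hf.comp measurable_fst
      · exact Finset.measurable_prod _ fun j _ =>
          hf.comp ((measurable_pi_apply j).comp measurable_snd)
    have step1 : ∫⁻ ω, ∏ i : Fin (n + 1), f (ω i) ∂(Measure.pi fun _ : Fin (n + 1) => μ)
        = ∫⁻ p, G p ∂(μ.prod (Measure.pi fun _ : Fin n => μ)) := by
      rw [← hMP.lintegral_comp hGmeas]
      congr 1
      ext ω
      simp only [hG, MeasurableEquiv.piFinSuccAbove, MeasurableEquiv.coe_mk,
        Equiv.coe_fn_mk, Fin.prod_univ_succ, Fin.removeNth, Fin.succAbove_zero]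
      rfl
    have hfprod : AEMeasurable (fun w : Fin n → α => ∏ j : Fin n, f (w j))
        (Measure.pi fun _ : Fin n => μ) :=
      (Finset.measurable_prod _ fun j _ => hf.comp (measurable_pi_apply j)).aemeasurable
    have h2 := lintegral_prod_mul (f := f) (g := fun w : Fin n → α => ∏ j : Fin n, f (w j))
      (μ := μ) (ν := Measure.pi fun _ : Fin n => μ) hf.aemeasurable hfprod
    rw [step1, hG]
    simp only []
    rw [h2, ih, pow_succ]
    ring

lemma gaussExpSq (t : ℝ) : ∀ (d : ℕ) (x : Fin d → ℝ) (m : ℝ),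
    2 * t * (∑ j, x j ^ 2) < 1 →
    ∫⁻ ω, ENNReal.ofReal (Real.exp (t * (m + ∑ j, x j * ω j) ^ 2))
        ∂(Measure.pi fun _ : Fin d => gaussianReal 0 1)
      = ENNReal.ofReal (Real.exp (t * m ^ 2 / (1 - 2 * t * (∑ j, x j ^ 2)))
          / Real.sqrt (1 - 2 * t * (∑ j, x j ^ 2))) := by
  intro d
  induction d with
  | zero =>
    intro x m h
    simp only [Finset.univ_eq_empty, Finset.sum_empty, add_zero, mul_zero, sub_zero,
      Real.sqrt_one, div_one]
    rw [lintegral_const]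
    simp [mul_zero, div_one]
  | succ n ih =>
    intro x m h
    -- split off coordinate 0
    have hMP := measurePreserving_piFinSuccAbove
      (fun _ : Fin (n + 1) => gaussianReal 0 1) 0
    set c' : ℝ := ∑ j : Fin n, x j.succ ^ 2 with hc'def
    have hc'0 : 0 ≤ c' := Finset.sum_nonneg fun j _ => sq_nonneg _
    have hx00 : (0:ℝ) ≤ x 0 ^ 2 := sq_nonneg _
    have hsum : (∑ j, x j ^ 2) = x 0 ^ 2 + c' := by
      rw [Fin.sum_univ_succ]
    have hc' : 2 * t * c' < 1 := by
      rcases le_or_gt 0 t with ht | ht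
      · nlinarith [hsum ▸ h]
      · nlinarith
    set β' : ℝ := 1 - 2 * t * c' with hβ'
    have hβ'0 : 0 < β' := by linarith
    have hkey : 2 * (t / β') * x 0 ^ 2 < 1 := by
      have e1 : 2 * (t / β') * x 0 ^ 2 = 2 * t * x 0 ^ 2 / β' := by ring
      have := hsum ▸ h
      rw [e1, div_lt_one hβ'0, hβ']
      nlinarith
    set G : ℝ × (Fin n → ℝ) → ENNReal := fun p =>
      ENNReal.ofReal (Real.exp (t * (m + x 0 * p.1 + ∑ j : Fin n, x j.succ * p.2 j) ^ 2))
      with hG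
    have hGmeas : Measurable G := by fun_prop
    have step1 : ∫⁻ ω, ENNReal.ofReal (Real.exp (t * (m + ∑ j, x j * ω j) ^ 2))
        ∂(Measure.pi fun _ : Fin (n + 1) => gaussianReal 0 1)
        = ∫⁻ p, G p ∂((gaussianReal 0 1).prod
            (Measure.pi fun _ : Fin n => gaussianReal 0 1)) := by
      rw [← hMP.lintegral_comp hGmeas]
      congr 1
      ext ω
      rw [hG]
      congr 3
      simp only [MeasurableEquiv.piFinSuccAbove]
      rw [Fin.sum_univ_succ]
      ring_nf
      congr 1
    rw [step1, lintegral_prod G hGmeas.aemeasurable]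
    have hβ0 : 0 < 1 - 2 * t * ∑ j, x j ^ 2 := by linarith
    rw [hsum] at hβ0 ⊢
    set β : ℝ := 1 - 2 * t * (x 0 ^ 2 + c') with hβdef
    have inner : ∀ a : ℝ, ∫⁻ w, G (a, w) ∂(Measure.pi fun _ : Fin n => gaussianReal 0 1)
        = ENNReal.ofReal (1 / Real.sqrt β')
          * ENNReal.ofReal (Real.exp ((t / β') * (m + x 0 * a) ^ 2)) := by
      intro a
      have := ih (fun j => x j.succ) (m + x 0 * a) hc'
      simp only [hG, add_assoc] at this ⊢
      rw [this, ← hc'def, ← hβ', ← ENNReal.ofReal_mul (by positivity)]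
      congr 1
      rw [div_mul_eq_mul_div, one_mul, eq_div_iff (by positivity)]
      rw [div_mul_eq_mul_div, div_eq_iff (by positivity)]
      congr 1
      ring
    simp_rw [inner]
    rw [lintegral_const_mul _ (by fun_prop), onedim (t / β') (x 0) m hkey,
      ← ENNReal.ofReal_mul (by positivity)]
    have hδ : 1 - 2 * (t / β') * x 0 ^ 2 = β / β' := by
      rw [hβdef, hβ']; field_simp [(show (1 - 2 * t * c') ≠ 0 by linarith)]; ring
    rw [hδ]
    congr 1
    have hsb : Real.sqrt β ≠ 0 := ne_of_gt (Real.sqrt_pos.mpr hβ0)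
    have hsb' : Real.sqrt β' ≠ 0 := ne_of_gt (Real.sqrt_pos.mpr hβ'0)
    rw [Real.sqrt_div hβ0.le]
    have he : t / β' * m ^ 2 / (β / β') = t * m ^ 2 / β := by
      field_simp
    rw [he]
    field_simp

lemma expmoment (r d : ℕ) (x : Fin d → ℝ) (t : ℝ) (h : 2 * t * (∑ j, x j ^ 2) < 1) :
    ∫⁻ Ω, ENNReal.ofReal (Real.exp (t * ∑ i : Fin r, (∑ j, Ω i j * x j) ^ 2)) ∂gaussMatrix r d
      = ENNReal.ofReal (1 / Real.sqrt (1 - 2 * t * (∑ j, x j ^ 2))) ^ r := by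
  have hrow : Measurable fun ω : Fin d → ℝ =>
      ENNReal.ofReal (Real.exp (t * (∑ j, ω j * x j) ^ 2)) := by fun_prop
  have step : ∀ Ω : Fin r → Fin d → ℝ,
      ENNReal.ofReal (Real.exp (t * ∑ i : Fin r, (∑ j, Ω i j * x j) ^ 2))
      = ∏ i : Fin r, ENNReal.ofReal (Real.exp (t * (∑ j, Ω i j * x j) ^ 2)) := by
    intro Ω
    rw [Finset.mul_sum, Real.exp_sum, ENNReal.ofReal_prod_of_nonneg]
    intro i _
    exact (Real.exp_pos _).le
  simp_rw [step]
  rw [gaussMatrix, lintegral_pi_pow _ _ hrow r]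
  congr 1
  have := gaussExpSq t d x 0 h
  simp only [zero_add] at this
  simp_rw [mul_comm (x _)] at this
  rw [this]
  norm_num

lemma chernoff_bound (r d : ℕ) (x : Fin d → ℝ) (t a : ℝ) (h : 2 * t * (∑ j, x j ^ 2) < 1)
    (E : Set (Fin r → Fin d → ℝ))
    (hE : ∀ Ω ∈ E, t * a ≤ t * ∑ i : Fin r, (∑ j, Ω i j * x j) ^ 2) :
    gaussMatrix r d E ≤ ENNReal.ofReal (Real.exp (-(t * a)))
      * ENNReal.ofReal (1 / Real.sqrt (1 - 2 * t * (∑ j, x j ^ 2))) ^ r := by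
  set f : (Fin r → Fin d → ℝ) → ℝ≥0∞ := fun Ω =>
    ENNReal.ofReal (Real.exp (t * ∑ i : Fin r, (∑ j, Ω i j * x j) ^ 2)) with hf
  have hfm : Measurable f := by fun_prop
  have h1 : E ⊆ {Ω | ENNReal.ofReal (Real.exp (t * a)) ≤ f Ω} := by
    intro Ω hΩ
    exact ENNReal.ofReal_le_ofReal (Real.exp_le_exp.mpr (hE Ω hΩ))
  have h2 := mul_meas_ge_le_lintegral₀ (μ := gaussMatrix r d) hfm.aemeasurable
    (ENNReal.ofReal (Real.exp (t * a)))
  calc gaussMatrix r d E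
      ≤ gaussMatrix r d {Ω | ENNReal.ofReal (Real.exp (t * a)) ≤ f Ω} := measure_mono h1
    _ = ENNReal.ofReal (Real.exp (-(t * a))) * (ENNReal.ofReal (Real.exp (t * a))
          * gaussMatrix r d {Ω | ENNReal.ofReal (Real.exp (t * a)) ≤ f Ω}) := by
        rw [← mul_assoc, ← ENNReal.ofReal_mul (Real.exp_pos _).le, ← Real.exp_add,
          neg_add_cancel, Real.exp_zero, ENNReal.ofReal_one, one_mul]
    _ ≤ ENNReal.ofReal (Real.exp (-(t * a))) * ∫⁻ Ω, f Ω ∂gaussMatrix r d :=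
        mul_le_mul_right h2 _
    _ = _ := by rw [hf]; rw [expmoment r d x t h]

/-- the ε-JL condition holds with probability at least 1−Δ.
For a fixed `x ∈ ℝ^d`, `ε, Δ ∈ (0,1)` and a random `Ω ∈ ℝ^{r×d}` with iid
`N(0,1)` entries, if `r ≥ (4/(ε²−ε³))·ln(2/Δ)` then with probability at
least `1 − Δ` one has `√(1−ε)·‖x‖₂ ≤ ‖(1/√r)·Ωx‖₂ ≤ √(1+ε)·‖x‖₂`. -/
theorem stmt5 (d r : ℕ) (x : Fin d → ℝ) (ε Δ : ℝ)
    (hε0 : 0 < ε) (hε1 : ε < 1) (hΔ0 : 0 < Δ) (hΔ1 : Δ < 1)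
    (hr : (4 / (ε ^ 2 - ε ^ 3)) * Real.log (2 / Δ) ≤ (r : ℝ)) :
    gaussMatrix r d {Ω | Real.sqrt (1 - ε) * Real.sqrt (∑ j, x j ^ 2) ≤
          Real.sqrt (∑ i : Fin r, ((1 / Real.sqrt r) * ∑ j, Ω i j * x j) ^ 2) ∧
        Real.sqrt (∑ i : Fin r, ((1 / Real.sqrt r) * ∑ j, Ω i j * x j) ^ 2) ≤
          Real.sqrt (1 + ε) * Real.sqrt (∑ j, x j ^ 2)} ≥
      ENNReal.ofReal (1 - Δ) := by
  classical
  have hc0 : 0 ≤ ∑ j, x j ^ 2 := Finset.sum_nonneg fun j _ => sq_nonneg _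
  set c : ℝ := ∑ j, x j ^ 2 with hcdef
  have hεε : 0 < ε ^ 2 - ε ^ 3 := by
    have h1ε : 0 < 1 - ε := by linarith
    have := mul_pos (pow_pos hε0 2) h1ε
    nlinarith
  have hlog : 0 < Real.log (2 / Δ) := Real.log_pos (by rw [lt_div_iff₀ hΔ0]; linarith)
  have hrpos : (0:ℝ) < r := lt_of_lt_of_le (by positivity) hr
  haveI : IsProbabilityMeasure (gaussMatrix r d) := by
    unfold gaussMatrix; infer_instance
  by_cases hczero : c = 0
  · -- x = 0 case
    have hx0 : ∀ j, x j = 0 := by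
      intro j
      have h := (Finset.sum_eq_zero_iff_of_nonneg
        (fun j _ => sq_nonneg (x j))).mp hczero j (Finset.mem_univ j)
      exact pow_eq_zero_iff (two_ne_zero) |>.mp h
    have hset : {Ω : Fin r → Fin d → ℝ | Real.sqrt (1 - ε) * Real.sqrt (∑ j, x j ^ 2) ≤
          Real.sqrt (∑ i : Fin r, ((1 / Real.sqrt r) * ∑ j, Ω i j * x j) ^ 2) ∧
        Real.sqrt (∑ i : Fin r, ((1 / Real.sqrt r) * ∑ j, Ω i j * x j) ^ 2) ≤
          Real.sqrt (1 + ε) * Real.sqrt (∑ j, x j ^ 2)} = Set.univ := by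
      ext Ω
      simp only [Set.mem_setOf_eq, Set.mem_univ, iff_true]
      simp [hx0]
    rw [hset]
    rw [measure_univ]
    exact ENNReal.ofReal_le_one.mpr (by linarith)
  · have hcpos : 0 < c := lt_of_le_of_ne hc0 (Ne.symm hczero)
    set S : (Fin r → Fin d → ℝ) → ℝ := fun Ω => ∑ i : Fin r, (∑ j, Ω i j * x j) ^ 2 with hSdef
    have hSm : Measurable S := by
      apply Finset.measurable_sum
      intro i _
      apply Measurable.pow_const
      apply Finset.measurable_sum
      intro j _
      exact ((measurable_pi_apply j).comp (measurable_pi_apply i)).mul_const _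
    have hS0 : ∀ Ω, 0 ≤ S Ω := fun Ω => Finset.sum_nonneg fun i _ => sq_nonneg _
    set l : ℝ := (1 - ε) * c * r with hldef
    set u : ℝ := (1 + ε) * c * r with hudef
    set G : Set (Fin r → Fin d → ℝ) := {Ω | l ≤ S Ω ∧ S Ω ≤ u} with hGdef
    have hGm : MeasurableSet G :=
      (measurableSet_le measurable_const hSm).inter (measurableSet_le hSm measurable_const)
    -- inclusion into the JL event
    have hnorm : ∀ Ω : Fin r → Fin d → ℝ,
        ∑ i : Fin r, ((1 / Real.sqrt r) * ∑ j, Ω i j * x j) ^ 2 = S Ω / r := by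
      intro Ω
      have hsq : (1 / Real.sqrt r) ^ 2 = 1 / (r:ℝ) := by
        rw [div_pow, one_pow, Real.sq_sqrt (Nat.cast_nonneg r)]
      simp_rw [mul_pow, hsq]
      rw [← Finset.mul_sum, hSdef, one_div, inv_mul_eq_div]
    have hincl : G ⊆ {Ω : Fin r → Fin d → ℝ | Real.sqrt (1 - ε) * Real.sqrt c ≤
          Real.sqrt (∑ i : Fin r, ((1 / Real.sqrt r) * ∑ j, Ω i j * x j) ^ 2) ∧
        Real.sqrt (∑ i : Fin r, ((1 / Real.sqrt r) * ∑ j, Ω i j * x j) ^ 2) ≤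
          Real.sqrt (1 + ε) * Real.sqrt c} := by
      rintro Ω ⟨h1, h2⟩
      rw [Set.mem_setOf_eq, hnorm Ω]
      constructor
      · rw [← Real.sqrt_mul (by linarith : (0:ℝ) ≤ 1 - ε)]
        apply Real.sqrt_le_sqrt
        rw [le_div_iff₀ hrpos]
        exact h1
      · rw [← Real.sqrt_mul (by linarith : (0:ℝ) ≤ 1 + ε)]
        apply Real.sqrt_le_sqrt
        rw [div_le_iff₀ hrpos]
        exact h2
    -- upper tail
    have hexp_target : Real.exp (-(↑r * (ε ^ 2 - ε ^ 3) / 4)) ≤ Δ / 2 := by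
      have h4 : Real.log (2 / Δ) ≤ (r:ℝ) * (ε ^ 2 - ε ^ 3) / 4 := by
        have h5 := mul_le_mul_of_nonneg_right hr hεε.le
        have h6 : 4 / (ε ^ 2 - ε ^ 3) * Real.log (2 / Δ) * (ε ^ 2 - ε ^ 3)
            = 4 * Real.log (2 / Δ) := by field_simp; exact div_self (sub_ne_zero.mpr hε1.ne')
        rw [h6] at h5
        linarith
      calc Real.exp (-(↑r * (ε ^ 2 - ε ^ 3) / 4)) ≤ Real.exp (-Real.log (2 / Δ)) :=
            Real.exp_le_exp.mpr (by linarith)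
        _ = Δ / 2 := by rw [Real.exp_neg, Real.exp_log (by positivity), inv_div]
    have hup : gaussMatrix r d {Ω | u ≤ S Ω} ≤ ENNReal.ofReal (Δ / 2) := by
      set t : ℝ := ε / (2 * (1 + ε) * c) with htdef
      have ht0 : 0 ≤ t := by positivity
      have htc : 2 * t * c = ε / (1 + ε) := by
        rw [htdef]; field_simp
      have hcond : 2 * t * c < 1 := by
        rw [htc, div_lt_one (by linarith)]; linarith
      have hβ : 1 - 2 * t * c = 1 / (1 + ε) := by
        rw [htc]; field_simp; ring
      have hB := chernoff_bound r d x t u hcond {Ω | u ≤ S Ω}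
        (fun Ω hΩ => mul_le_mul_of_nonneg_left hΩ ht0)
      refine le_trans hB ?_
      rw [← ENNReal.ofReal_pow (by positivity), ← ENNReal.ofReal_mul (Real.exp_pos _).le]
      apply ENNReal.ofReal_le_ofReal
      have htu : t * u = ε * r / 2 := by
        rw [htdef, hudef]; field_simp
      have hsqrt : 1 / Real.sqrt (1 - 2 * t * c) = Real.sqrt (1 + ε) := by
        rw [hβ, one_div (1+ε), Real.sqrt_inv, one_div, inv_inv]
      rw [htu, hsqrt]
      have hpow : Real.sqrt (1 + ε) ^ r = Real.exp ((r:ℝ) * (Real.log (1 + ε) / 2)) := by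
        rw [← Real.log_sqrt (by linarith), Real.exp_nat_mul,
          Real.exp_log (Real.sqrt_pos.mpr (by linarith))]
      rw [hpow, ← Real.exp_add]
      refine le_trans ?_ hexp_target
      apply Real.exp_le_exp.mpr
      have hl1 := log_ineq1 hε0.le
      have : (r:ℝ) * (Real.log (1 + ε) / 2) ≤ (r:ℝ) * ((ε - ε^2/2 + ε^3/2) / 2) := by
        apply mul_le_mul_of_nonneg_left _ (by positivity)
        linarith
      nlinarith [this]
    -- lower tail
    have hlo : gaussMatrix r d {Ω | S Ω ≤ l} ≤ ENNReal.ofReal (Δ / 2) := by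
      set t : ℝ := -(ε / (2 * (1 - ε) * c)) with htdef
      have ht0 : t ≤ 0 := by
        rw [htdef, neg_nonpos]
        have : (0:ℝ) < 1 - ε := by linarith
        positivity
      have htc : 2 * t * c = -(ε / (1 - ε)) := by
        rw [htdef]
        have h1ε : (1:ℝ) - ε ≠ 0 := by intro he; linarith [he]
        field_simp
      have hcond : 2 * t * c < 1 := by
        rw [htc]
        have : 0 < ε / (1 - ε) := by
          apply div_pos hε0; linarith
        linarith
      have hβ : 1 - 2 * t * c = 1 / (1 - ε) := by
        rw [htc]
        have h1ε : (1:ℝ) - ε ≠ 0 := by intro he; linarith [he]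
        field_simp
        ring
      have hB := chernoff_bound r d x t l hcond {Ω | S Ω ≤ l}
        (fun Ω hΩ => mul_le_mul_of_nonpos_left hΩ ht0)
      refine le_trans hB ?_
      rw [← ENNReal.ofReal_pow (by positivity), ← ENNReal.ofReal_mul (Real.exp_pos _).le]
      apply ENNReal.ofReal_le_ofReal
      have htl : -(t * l) = ε * r / 2 := by
        rw [htdef, hldef]
        have h1ε : (1:ℝ) - ε ≠ 0 := by intro he; linarith [he]
        field_simp
      have hsqrt : 1 / Real.sqrt (1 - 2 * t * c) = Real.sqrt (1 - ε) := by
        rw [hβ, one_div (1-ε), Real.sqrt_inv, one_div, inv_inv]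
      rw [htl, hsqrt]
      have hpow : Real.sqrt (1 - ε) ^ r = Real.exp ((r:ℝ) * (Real.log (1 - ε) / 2)) := by
        rw [← Real.log_sqrt (by linarith), Real.exp_nat_mul,
          Real.exp_log (Real.sqrt_pos.mpr (by linarith))]
      rw [hpow, ← Real.exp_add]
      refine le_trans ?_ hexp_target
      apply Real.exp_le_exp.mpr
      have hl2 := log_ineq2 hε0.le hε1
      have : (r:ℝ) * (Real.log (1 - ε) / 2) ≤ (r:ℝ) * ((-ε - ε^2/2) / 2) := by
        apply mul_le_mul_of_nonneg_left _ (by positivity)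
        linarith
      have h9 : 0 ≤ (r:ℝ) * ε ^ 3 := by positivity
      linarith [this, h9]
    -- combine
    have hcompl : Gᶜ ⊆ {Ω | S Ω ≤ l} ∪ {Ω | u ≤ S Ω} := by
      intro Ω hΩ
      rw [Set.mem_compl_iff, hGdef, Set.mem_setOf_eq, not_and_or] at hΩ
      rcases hΩ with h | h
      · left; exact le_of_lt (lt_of_not_ge h)
      · right; exact le_of_lt (lt_of_not_ge h)
    have hcomplb : gaussMatrix r d Gᶜ ≤ ENNReal.ofReal Δ := by
      calc gaussMatrix r d Gᶜ ≤ gaussMatrix r d ({Ω | S Ω ≤ l} ∪ {Ω | u ≤ S Ω}) :=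
            measure_mono hcompl
        _ ≤ gaussMatrix r d {Ω | S Ω ≤ l} + gaussMatrix r d {Ω | u ≤ S Ω} := measure_union_le _ _
        _ ≤ ENNReal.ofReal (Δ / 2) + ENNReal.ofReal (Δ / 2) := add_le_add hlo hup
        _ = ENNReal.ofReal Δ := by
            rw [← ENNReal.ofReal_add (by positivity) (by positivity)]
            norm_num
    calc ENNReal.ofReal (1 - Δ) ≤ 1 - ENNReal.ofReal Δ := by
          rw [← ENNReal.ofReal_one, ← ENNReal.ofReal_sub _ hΔ0.le]
      _ ≤ 1 - gaussMatrix r d Gᶜ := tsub_le_tsub_left hcomplb _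
      _ = gaussMatrix r d G := by
          rw [prob_compl_eq_one_sub hGm, ENNReal.sub_sub_cancel ENNReal.one_ne_top prob_le_one]
      _ ≤ _ := measure_mono hincl
end

section
/- Let n ≥ 1 and define W, L, U ∈ ℝ^{n×n} by: W(i,i) = 1, W(i,j) = −1 for i > j, W(i,n) = 1 for i < n, and W(i,j) = 0 otherwise; L(i,i) = 1, L(i,j) = −1 for i > j, L(i,j) = 0 for i < j; U(i,i) = 1 for i < n, U(i,n) = 2^{i−1} for all i (so U(n,n) = 2^{n−1}), and U(i,j) = 0 otherwise. Then W = L·U; consequently max_{i,j}|U(i,j)| = 2^{n−1} = 2^{n−1}·max_{i,j}|W(i,j)| and ‖U(:,n)‖₂ /‖W(:,n)‖₂ ≥ 2^{n−1}/√n. -/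
lemma geom_key (n i : ℕ) (hi : i < n) :
    ∑ k ∈ Finset.range n, (if i = k then (1:ℝ) else if k < i then -1 else 0) * 2 ^ k = 1 := by
  have hsplit : Finset.range n = Finset.range (i+1) ∪ Finset.Ico (i+1) n := by
    rw [Finset.range_eq_Ico, Finset.range_eq_Ico, Finset.Ico_union_Ico_eq_Ico (by omega) (by omega)]
  rw [hsplit, Finset.sum_union (by simp [Finset.disjoint_left]; omega)]
  have h2 : ∑ k ∈ Finset.Ico (i+1) n, (if i = k then (1:ℝ) else if k < i then -1 else 0) * 2 ^ k = 0 := by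
    apply Finset.sum_eq_zero
    intro k hk
    simp only [Finset.mem_Ico] at hk
    rw [if_neg (by omega), if_neg (by omega)]
    ring
  rw [h2, add_zero, Finset.sum_range_succ, if_pos rfl]
  have h1 : ∑ k ∈ Finset.range i, (if i = k then (1:ℝ) else if k < i then -1 else 0) * 2 ^ k
      = -(2 ^ i - 1) := by
    have : ∀ k ∈ Finset.range i, (if i = k then (1:ℝ) else if k < i then -1 else 0) * 2 ^ k
        = -(2 ^ k) := by
      intro k hk
      simp only [Finset.mem_range] at hk
      rw [if_neg (by omega), if_pos hk]; ring
    rw [Finset.sum_congr rfl this]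
    have hg := geom_sum_eq (by norm_num : (2:ℝ) ≠ 1) i
    rw [Finset.sum_neg_distrib, hg]
    norm_num
  rw [h1]; ring

/-- the Wilkinson matrix and its LU factorization.
With `W` the Wilkinson matrix (ones on the diagonal and in the last column,
`−1` below the diagonal, zeros elsewhere), `L` unit lower triangular with
`−1` below the diagonal, and `U` the identity except that its last column is
`(1, 2, 2², …, 2^{n−1})ᵀ`, one has `W = L·U`; consequently
`max_{i,j}|U(i,j)| = 2^{n−1} = 2^{n−1}·max_{i,j}|W(i,j)|` and
`‖U(:,n)‖₂/‖W(:,n)‖₂ ≥ 2^{n−1}/√n`. -/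
theorem stmt8 (n : ℕ) (hn : 1 ≤ n)
    (W L U : Matrix (Fin n) (Fin n) ℝ)
    (hW : ∀ i j, W i j =
      if j.val = n - 1 then 1 else if i = j then 1 else if j < i then -1 else 0)
    (hL : ∀ i j, L i j = if i = j then 1 else if j < i then -1 else 0)
    (hU : ∀ i j, U i j =
      if j.val = n - 1 then 2 ^ i.val else if i = j then 1 else 0) :
    W = L * U ∧
      (⨆ i, ⨆ j, |U i j|) = 2 ^ (n - 1) ∧
      (⨆ i, ⨆ j, |U i j|) = 2 ^ (n - 1) * (⨆ i, ⨆ j, |W i j|) ∧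
      Real.sqrt (∑ i, U i ⟨n - 1, by omega⟩ ^ 2) /
          Real.sqrt (∑ i, W i ⟨n - 1, by omega⟩ ^ 2) ≥
        2 ^ (n - 1) / Real.sqrt n := by
  haveI : NeZero n := ⟨by omega⟩
  set last : Fin n := ⟨n - 1, by omega⟩ with hlast
  have hbdd : ∀ (f : Fin n → ℝ), BddAbove (Set.range f) := fun f => (Set.finite_range f).bddAbove
  -- Part 1 : W = L * U
  have part1 : W = L * U := by
    ext i j
    rw [Matrix.mul_apply, hW]
    by_cases hj : j.val = n - 1
    · rw [if_pos hj]
      have : ∀ k : Fin n, L i k * U k j =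
          (if i.val = k.val then (1:ℝ) else if k.val < i.val then -1 else 0) * 2 ^ k.val := by
        intro k
        rw [hL, hU, if_pos hj]
        congr 1
        simp only [Fin.ext_iff, Fin.lt_def]
      rw [Finset.sum_congr rfl (fun k _ => this k), Fin.sum_univ_eq_sum_range
        (fun k => (if i.val = k then (1:ℝ) else if k < i.val then -1 else 0) * 2 ^ k)]
      exact (geom_key n i.val i.isLt).symm
    · rw [if_neg hj]
      have : ∀ k : Fin n, L i k * U k j = if k = j then L i j else 0 := by
        intro k
        rw [hU, if_neg hj]
        by_cases hk : k = j
        · subst hk; simp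
        · simp [hk]
      rw [Finset.sum_congr rfl (fun k _ => this k), Finset.sum_ite_eq' Finset.univ j]
      simp [hL]
  -- sup of |U|
  have hUin : ∀ i : Fin n, (⨆ j, |U i j|) = 2 ^ i.val := by
    intro i
    apply le_antisymm
    · apply ciSup_le
      intro j
      rw [hU]
      have h1 : (1:ℝ) ≤ 2 ^ i.val := one_le_pow₀ (by norm_num)
      split_ifs
      · rw [abs_of_pos (by positivity)]
      · rw [abs_one]; exact h1
      · rw [abs_zero]; linarith
    · have := le_ciSup (hbdd fun j => |U i j|) last
      rw [hU, if_pos rfl] at this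
      calc (2:ℝ) ^ i.val = |(2:ℝ) ^ i.val| := by rw [abs_of_pos (by positivity)]
        _ ≤ _ := this
  have hUsup : (⨆ i, ⨆ j, |U i j|) = 2 ^ (n - 1) := by
    apply le_antisymm
    · apply ciSup_le
      intro i
      rw [hUin i]
      exact pow_le_pow_right₀ (by norm_num) (by omega)
    · have := le_ciSup (hbdd fun i => ⨆ j, |U i j|) last
      rwa [hUin last] at this
  -- sup of |W| = 1
  have hWin : ∀ i : Fin n, (⨆ j, |W i j|) = 1 := by
    intro i
    apply le_antisymm
    · apply ciSup_le
      intro j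
      rw [hW]
      split_ifs <;> norm_num
    · have := le_ciSup (hbdd fun j => |W i j|) last
      rw [hW, if_pos rfl] at this
      simpa using this
  have hWsup : (⨆ i, ⨆ j, |W i j|) = 1 := by
    apply le_antisymm
    · apply ciSup_le; intro i; rw [hWin i]
    · have := le_ciSup (hbdd fun i => ⨆ j, |W i j|) (last)
      rwa [hWin last] at this
  refine ⟨part1, hUsup, by rw [hUsup, hWsup, mul_one], ?_⟩
  -- Part 4
  have hWcol : (∑ i, W i last ^ 2) = (n : ℝ) := by
    have : ∀ i : Fin n, W i last ^ 2 = 1 := by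
      intro i; rw [hW, if_pos rfl]; norm_num
    rw [Finset.sum_congr rfl (fun i _ => this i)]
    simp
  have hUcol : (4:ℝ) ^ (n - 1) ≤ ∑ i, U i last ^ 2 := by
    have hterm : U last last ^ 2 = 4 ^ (n - 1) := by
      rw [hU, if_pos rfl, ← pow_mul, show (4:ℝ) = 2^2 by norm_num, ← pow_mul, mul_comm]
    calc (4:ℝ) ^ (n-1) = U last last ^ 2 := hterm.symm
      _ ≤ ∑ i, U i last ^ 2 :=
        Finset.single_le_sum (f := fun i => U i last ^ 2) (fun i _ => sq_nonneg _) (Finset.mem_univ last)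
  rw [hWcol, ge_iff_le, div_le_div_iff_of_pos_right (Real.sqrt_pos.mpr (by positivity))]
  calc (2:ℝ) ^ (n - 1) = Real.sqrt (4 ^ (n - 1)) := by
        rw [show (4:ℝ) = 2^2 by norm_num, ← pow_mul, mul_comm,
          pow_mul, Real.sqrt_sq (by positivity)]
    _ ≤ _ := Real.sqrt_le_sqrt hUcol
end

section
/- Let S ∈ ℝ^{d×m} be a matrix with columns S(:,1),...,S(:,m), let Ω ∈ ℝ^{r×d}, let ε ∈ (0,1), g ∈ (0,1], and let α ∈ {1,...,m} be an index such that g·‖Ω·S(:,α)‖₂ ≥ ‖Ω·S(:,j)‖₂ for every j. Suppose moreover that ‖(1/√r)·Ω·S(:,α)‖₂ ≤ √(1+ε)·‖S(:,α)‖₂ and that √(1−ε)·‖S(:,j)‖₂ ≤ ‖(1/√r)·Ω·S(:,j)‖₂ for every j ≠ α. Then max_{1≤j≤m} ‖S(:,j)‖₂ ≤ (1/g)·√((1+ε)/(1−ε))·‖S(:,α)‖₂. -/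
open Matrix

/-- deterministic core of the randomized norm-preservation
lemma for GERCP.  If the sketched pivot column `Ω·S(:,α)` is, up to the
threshold factor `g`, the largest sketched column, the pivot column satisfies
the upper ε-JL bound, and every other column satisfies the lower ε-JL bound,
then `max_j ‖S(:,j)‖₂ ≤ (1/g)·√((1+ε)/(1−ε))·‖S(:,α)‖₂`. -/
theorem stmt10 (d m r : ℕ) (S : Matrix (Fin d) (Fin m) ℝ)
    (Ω : Matrix (Fin r) (Fin d) ℝ) (ε g : ℝ)
    (hε0 : 0 < ε) (hε1 : ε < 1) (hg0 : 0 < g) (hg1 : g ≤ 1)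
    (α : Fin m)
    (hα : ∀ j : Fin m,
      Real.sqrt (∑ i, (Ω *ᵥ fun k => S k j) i ^ 2) ≤
        g * Real.sqrt (∑ i, (Ω *ᵥ fun k => S k α) i ^ 2))
    (hupper : Real.sqrt (∑ i, ((1 / Real.sqrt r) • (Ω *ᵥ fun k => S k α)) i ^ 2) ≤
      Real.sqrt (1 + ε) * Real.sqrt (∑ k, S k α ^ 2))
    (hlower : ∀ j : Fin m, j ≠ α →
      Real.sqrt (1 - ε) * Real.sqrt (∑ k, S k j ^ 2) ≤
        Real.sqrt (∑ i, ((1 / Real.sqrt r) • (Ω *ᵥ fun k => S k j)) i ^ 2)) :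
    ∀ j : Fin m, Real.sqrt (∑ k, S k j ^ 2) ≤
      (1 / g) * Real.sqrt ((1 + ε) / (1 - ε)) * Real.sqrt (∑ k, S k α ^ 2) := by
  intro j
  set c : ℝ := 1 / Real.sqrt r with hc
  have hc0 : 0 ≤ c := by positivity
  have hscale : ∀ v : Fin r → ℝ,
      Real.sqrt (∑ i, (c • v) i ^ 2) = c * Real.sqrt (∑ i, v i ^ 2) := by
    intro v
    have : (∑ i, (c • v) i ^ 2) = c ^ 2 * ∑ i, v i ^ 2 := by
      simp [Finset.mul_sum, mul_pow]
    rw [this, Real.sqrt_mul (by positivity), Real.sqrt_sq hc0]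
  have h1ε : (0:ℝ) < 1 - ε := by linarith
  have h1ε' : (0:ℝ) < 1 + ε := by linarith
  set Nα := Real.sqrt (∑ k, S k α ^ 2)
  have hNα : 0 ≤ Nα := Real.sqrt_nonneg _
  have hsqrtdiv : Real.sqrt ((1 + ε) / (1 - ε)) =
      Real.sqrt (1 + ε) / Real.sqrt (1 - ε) := Real.sqrt_div' _ (le_of_lt h1ε) ▸ by
    rw [Real.sqrt_div h1ε'.le]
  have hge1 : (1:ℝ) ≤ (1 / g) * Real.sqrt ((1 + ε) / (1 - ε)) := by
    have h1 : (1:ℝ) ≤ 1 / g := by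
      rw [le_div_iff₀ hg0]; linarith
    have h2 : (1:ℝ) ≤ Real.sqrt ((1 + ε) / (1 - ε)) := by
      have : (1:ℝ) ≤ (1 + ε) / (1 - ε) := by
        rw [le_div_iff₀ h1ε]; linarith
      calc (1:ℝ) = Real.sqrt 1 := Real.sqrt_one.symm
      _ ≤ _ := Real.sqrt_le_sqrt this
    calc (1:ℝ) = 1 * 1 := by ring
    _ ≤ (1 / g) * Real.sqrt ((1 + ε) / (1 - ε)) := by
        apply mul_le_mul h1 h2 zero_le_one (by positivity)
  by_cases hj : j = α
  · subst hj
    calc Nα = 1 * Nα := (one_mul _).symm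
    _ ≤ (1 / g) * Real.sqrt ((1 + ε) / (1 - ε)) * Nα :=
        mul_le_mul_of_nonneg_right hge1 hNα
  · have hlow := hlower j hj
    rw [hscale] at hlow hupper
    have hchain : Real.sqrt (1 - ε) * Real.sqrt (∑ k, S k j ^ 2) ≤
        g * (Real.sqrt (1 + ε) * Nα) := by
      calc Real.sqrt (1 - ε) * Real.sqrt (∑ k, S k j ^ 2)
          ≤ c * Real.sqrt (∑ i, (Ω *ᵥ fun k => S k j) i ^ 2) := hlow
      _ ≤ c * (g * Real.sqrt (∑ i, (Ω *ᵥ fun k => S k α) i ^ 2)) :=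
          mul_le_mul_of_nonneg_left (hα j) hc0
      _ = g * (c * Real.sqrt (∑ i, (Ω *ᵥ fun k => S k α) i ^ 2)) := by ring
      _ ≤ g * (Real.sqrt (1 + ε) * Nα) :=
          mul_le_mul_of_nonneg_left hupper hg0.le
    have hsq : (0:ℝ) < Real.sqrt (1 - ε) := Real.sqrt_pos.mpr h1ε
    have hNj : Real.sqrt (∑ k, S k j ^ 2) ≤
        g * (Real.sqrt (1 + ε) / Real.sqrt (1 - ε) * Nα) := by
      rw [show g * (Real.sqrt (1 + ε) / Real.sqrt (1 - ε) * Nα)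
            = g * (Real.sqrt (1 + ε) * Nα) / Real.sqrt (1 - ε) by ring,
          le_div_iff₀ hsq]
      linarith [mul_comm (Real.sqrt (∑ k, S k j ^ 2)) (Real.sqrt (1 - ε))]
    have hgle : g ≤ 1 / g := by
      rw [le_div_iff₀ hg0]; nlinarith
    calc Real.sqrt (∑ k, S k j ^ 2)
        ≤ g * (Real.sqrt (1 + ε) / Real.sqrt (1 - ε) * Nα) := hNj
    _ ≤ (1 / g) * (Real.sqrt (1 + ε) / Real.sqrt (1 - ε) * Nα) := by
        apply mul_le_mul_of_nonneg_right hgle (by positivity)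
    _ = (1 / g) * Real.sqrt ((1 + ε) / (1 - ε)) * Nα := by
        rw [hsqrtdiv]; ring
end

section
/- Let n ≥ 1 and τ ≥ 1 be real, and let c_1, ..., c_n be positive reals satisfying, for all integers 1 ≤ k ≤ m ≤ n, the inequality ∏_{j=k}^{m} c_j ≤ τ^{m−k} · √((n−k+1)!/(n−m)!) · c_k^{m−k+1}. Then for every 1 < m ≤ n, c_m / c_1 ≤ √(n−m+1) · f(m, n−m) · τ · (m−1)^{ln τ}, where f(m,t) = √( (2+t)·(3+t)^{1/2}·(4+t)^{1/3} ··· (m+t)^{1/(m−1)} ) is the generalized Wilkinson function. -/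
open Finset

/-- Wilkinson weights. -/
noncomputable def wilkW (m k : ℕ) : ℝ :=
  if k = 1 then 1 / ((m : ℝ) - 1) else 1 / (((m : ℝ) - k) * ((m : ℝ) - k + 1))

lemma wilkW_pos {m k : ℕ} (hm : 2 ≤ m) (hk1 : 1 ≤ k) (hk : k ≤ m - 1) : 0 < wilkW m k := by
  have hkm : (k : ℝ) ≤ (m : ℝ) - 1 := by
    have : k ≤ m - 1 := hk
    have : (k : ℝ) ≤ ((m - 1 : ℕ) : ℝ) := by exact_mod_cast this
    rwa [Nat.cast_sub (by omega), Nat.cast_one] at this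
  unfold wilkW
  split
  · have : (1 : ℝ) ≤ (m : ℝ) - 1 := by
      have : (2 : ℝ) ≤ (m : ℝ) := by exact_mod_cast hm
      linarith
    positivity
  · have h1 : (0 : ℝ) < (m : ℝ) - k := by linarith
    have h2 : (0 : ℝ) < (m : ℝ) - k + 1 := by linarith
    positivity

/-- Partial sums of the Wilkinson weights. -/
lemma wilkW_sum {m : ℕ} (hm : 2 ≤ m) : ∀ j : ℕ, 1 ≤ j → j ≤ m - 1 →
    ∑ k ∈ Icc 1 j, wilkW m k = 1 / ((m : ℝ) - j) := by
  intro j hj1 hj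
  induction j with
  | zero => omega
  | succ p ih =>
    rcases Nat.eq_or_lt_of_le hj1 with h1 | h1
    · simp [← h1, wilkW]
    · have hp1 : 1 ≤ p := by omega
      have hp : p ≤ m - 1 := by omega
      rw [Finset.sum_Icc_succ_top (by omega), ih hp1 hp]
      have hne : p + 1 ≠ 1 := by omega
      rw [wilkW, if_neg hne]
      have hlt : (p : ℝ) + 1 ≤ (m : ℝ) - 1 := by
        have : ((p + 1 : ℕ) : ℝ) ≤ ((m - 1 : ℕ) : ℝ) := by exact_mod_cast hj
        rw [Nat.cast_sub (by omega)] at this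
        push_cast at this ⊢
        linarith
      have e1 : (m : ℝ) - p ≠ 0 := by push_cast; intro h; linarith
      have e2 : (m : ℝ) - (p + 1) ≠ 0 := by push_cast; intro h; linarith
      have e3 : (m : ℝ) - (p + 1) + 1 ≠ 0 := by push_cast; intro h; linarith
      push_cast at e1 e2 e3 ⊢
      field_simp
      ring

lemma wilk_identity {m : ℕ} (hm : 2 ≤ m) (x : ℕ → ℝ) :
    ∑ k ∈ Icc 1 (m - 1), wilkW m k *
      ((∑ j ∈ Icc (k + 1) m, x j) - ((m : ℝ) - k) * x k) = x m - x 1 := by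
  have hcast : ∀ k : ℕ, k ≤ m → ((m - k : ℕ) : ℝ) = (m : ℝ) - k := fun k hk => by
    rw [Nat.cast_sub hk]
  simp only [mul_sub, Finset.mul_sum]
  rw [Finset.sum_sub_distrib]
  -- first double sum: swap order
  have hswap : ∑ k ∈ Icc 1 (m - 1), ∑ j ∈ Icc (k + 1) m, wilkW m k * x j
      = ∑ j ∈ Icc 2 m, ∑ k ∈ Icc 1 (j - 1), wilkW m k * x j := by
    apply Finset.sum_comm'
    intro k j
    simp only [Finset.mem_Icc]
    omega
  rw [hswap]
  have hinner : ∀ j ∈ Icc 2 m, ∑ k ∈ Icc 1 (j - 1), wilkW m k * x j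
      = (1 / ((m : ℝ) - j + 1)) * x j := by
    intro j hj
    rw [Finset.mem_Icc] at hj
    rw [← Finset.sum_mul, wilkW_sum hm (j - 1) (by omega) (by omega)]
    congr 1
    rw [Nat.cast_sub (by omega)]
    push_cast
    ring_nf
  rw [Finset.sum_congr rfl hinner]
  -- split top element j = m from first sum
  have hm1 : m - 1 + 1 = m := by omega
  have hsplit1 : ∑ j ∈ Icc 2 m, (1 / ((m : ℝ) - j + 1)) * x j
      = (∑ j ∈ Icc 2 (m - 1), (1 / ((m : ℝ) - j + 1)) * x j) + x m := by
    have step : ∑ j ∈ Icc 2 (m - 1 + 1), (1 / ((m : ℝ) - j + 1)) * x j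
        = (∑ j ∈ Icc 2 (m - 1), (1 / ((m : ℝ) - j + 1)) * x j)
          + (1 / ((m : ℝ) - (m - 1 + 1 : ℕ) + 1)) * x (m - 1 + 1) :=
      Finset.sum_Icc_succ_top (by omega) _
    rw [hm1] at step
    rw [step]
    have : (m : ℝ) - (m : ℕ) + 1 = 1 := by push_cast; ring
    rw [this, one_div_one, one_mul]
  -- split bottom element k = 1 from second sum
  have hsplit2 : ∑ k ∈ Icc 1 (m - 1), wilkW m k * (((m : ℝ) - k) * x k)
      = x 1 + ∑ k ∈ Icc 2 (m - 1), wilkW m k * (((m : ℝ) - k) * x k) := by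
    rw [← Finset.Ioc_insert_left (by omega : 1 ≤ m - 1), Finset.sum_insert (by simp)]
    have hterm : wilkW m 1 * (((m : ℝ) - 1) * x 1) = x 1 := by
      rw [wilkW, if_pos rfl]
      have hne : (m : ℝ) - 1 ≠ 0 := by
        have : (2 : ℝ) ≤ (m : ℝ) := by exact_mod_cast hm
        intro h; linarith
      push_cast
      field_simp
    rw [Nat.cast_one, hterm, ← Finset.Icc_add_one_left_eq_Ioc]; rfl
  rw [hsplit1, hsplit2]
  have hmid : ∑ j ∈ Icc 2 (m - 1), (1 / ((m : ℝ) - j + 1)) * x j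
      = ∑ k ∈ Icc 2 (m - 1), wilkW m k * (((m : ℝ) - k) * x k) := by
    apply Finset.sum_congr rfl
    intro k hk
    rw [Finset.mem_Icc] at hk
    have hkm : (k : ℝ) ≤ (m : ℝ) - 1 := by
      have : (k : ℝ) ≤ ((m - 1 : ℕ) : ℝ) := by exact_mod_cast hk.2
      rwa [Nat.cast_sub (by omega), Nat.cast_one] at this
    rw [wilkW, if_neg (by omega)]
    have e1 : (m : ℝ) - k ≠ 0 := by intro h; linarith
    have e2 : (m : ℝ) - k + 1 ≠ 0 := by intro h; linarith
    field_simp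
  rw [hmid]
  ring

lemma harm_le_log : ∀ N : ℕ, 1 ≤ N → ∑ i ∈ Icc 2 N, (1 : ℝ) / i ≤ Real.log N := by
  intro N hN
  induction N with
  | zero => omega
  | succ p ih =>
    rcases Nat.eq_or_lt_of_le hN with h1 | h1
    · simp [← h1]
    · have hp : 1 ≤ p := by omega
      rw [Finset.sum_Icc_succ_top (by omega)]
      have hplt : (0 : ℝ) < p := by exact_mod_cast hp
      have key : Real.log p + 1 / ((p : ℝ) + 1) ≤ Real.log (p + 1) := by
        have hq : (0 : ℝ) < (p : ℝ) / (p + 1) := by positivity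
        have h2 := Real.log_le_sub_one_of_pos hq
        rw [Real.log_div (ne_of_gt hplt) (by positivity)] at h2
        have h3 : (p : ℝ) / (p + 1) - 1 = -(1 / ((p : ℝ) + 1)) := by field_simp; ring
        rw [h3] at h2
        linarith
      have := ih hp
      push_cast
      push_cast at key
      linarith

lemma wilk_partA {m : ℕ} (hm : 2 ≤ m) :
    ∑ k ∈ Icc 1 (m - 1), wilkW m k * ((m : ℝ) - k) ≤ 1 + Real.log ((m : ℝ) - 1) := by
  have hcast : ((m - 1 : ℕ) : ℝ) = (m : ℝ) - 1 := by
    rw [Nat.cast_sub (by omega), Nat.cast_one]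
  have hsplit : ∑ k ∈ Icc 1 (m - 1), wilkW m k * ((m : ℝ) - k)
      = wilkW m 1 * ((m : ℝ) - 1) + ∑ k ∈ Icc 2 (m - 1), wilkW m k * ((m : ℝ) - k) := by
    rw [← Finset.Ioc_insert_left (by omega : 1 ≤ m - 1), Finset.sum_insert (by simp),
      ← Finset.Icc_add_one_left_eq_Ioc]
    norm_num
  rw [hsplit]
  have h1 : wilkW m 1 * ((m : ℝ) - 1) = 1 := by
    rw [wilkW, if_pos rfl]
    have hne : (m : ℝ) - 1 ≠ 0 := by
      have : (2 : ℝ) ≤ (m : ℝ) := by exact_mod_cast hm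
      intro h; linarith
    field_simp
  rw [h1]
  have h2 : ∑ k ∈ Icc 2 (m - 1), wilkW m k * ((m : ℝ) - k)
      = ∑ i ∈ Icc 2 (m - 1), (1 : ℝ) / i := by
    apply Finset.sum_nbij' (fun k => m + 1 - k) (fun i => m + 1 - i)
    · intro a ha; rw [Finset.mem_Icc] at *; omega
    · intro a ha; rw [Finset.mem_Icc] at *; omega
    · intro a ha; rw [Finset.mem_Icc] at ha; omega
    · intro a ha; rw [Finset.mem_Icc] at ha; omega
    · intro a ha
      rw [Finset.mem_Icc] at ha
      have hale : (a : ℝ) ≤ (m : ℝ) - 1 := by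
        have : (a : ℝ) ≤ ((m - 1 : ℕ) : ℝ) := by exact_mod_cast ha.2
        rwa [hcast] at this
      have ha2 : (2 : ℝ) ≤ (a : ℝ) := by exact_mod_cast ha.1
      have e1 : (m : ℝ) - a ≠ 0 := by intro h; linarith
      have e2 : (m : ℝ) - a + 1 ≠ 0 := by intro h; linarith
      have hc2 : ((m + 1 - a : ℕ) : ℝ) = (m : ℝ) + 1 - a := by
        rw [Nat.cast_sub (by omega)]; push_cast; ring
      rw [hc2, show (m : ℝ) + 1 - a = (m : ℝ) - a + 1 from by ring]
      rw [eq_div_iff e2, wilkW, if_neg (by omega)]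
      field_simp
  rw [h2]
  have := harm_le_log (m - 1) (by omega)
  rw [hcast] at this
  linarith

lemma wilk_Lswap {m : ℕ} (hm : 2 ≤ m) (g : ℕ → ℝ) :
    ∑ k ∈ Icc 1 (m - 1), wilkW m k * (∑ s ∈ Icc 1 (m - k + 1), g s)
      = g 1 + ∑ s ∈ Icc 2 m, (1 / ((s : ℝ) - 1)) * g s := by
  have hstep : ∀ k ∈ Icc 1 (m - 1),
      wilkW m k * (∑ s ∈ Icc 1 (m - k + 1), g s)
        = wilkW m k * g 1 + ∑ s ∈ Icc 2 (m - k + 1), wilkW m k * g s := by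
    intro k hk
    rw [Finset.mem_Icc] at hk
    have : ∑ s ∈ Icc 1 (m - k + 1), g s = g 1 + ∑ s ∈ Icc 2 (m - k + 1), g s := by
      rw [← Finset.Ioc_insert_left (by omega : 1 ≤ m - k + 1), Finset.sum_insert (by simp),
        ← Finset.Icc_add_one_left_eq_Ioc]; rfl
    rw [this, mul_add, Finset.mul_sum]
  rw [Finset.sum_congr rfl hstep, Finset.sum_add_distrib, ← Finset.sum_mul]
  have hT : ∑ k ∈ Icc 1 (m - 1), wilkW m k = 1 := by
    rw [wilkW_sum hm (m - 1) (by omega) le_rfl]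
    rw [Nat.cast_sub (by omega), Nat.cast_one]
    norm_num
  rw [hT, one_mul]
  congr 1
  have hswap : ∑ k ∈ Icc 1 (m - 1), ∑ s ∈ Icc 2 (m - k + 1), wilkW m k * g s
      = ∑ s ∈ Icc 2 m, ∑ k ∈ Icc 1 (m + 1 - s), wilkW m k * g s := by
    apply Finset.sum_comm'
    intro k s
    simp only [Finset.mem_Icc]
    omega
  rw [hswap]
  apply Finset.sum_congr rfl
  intro s hs
  rw [Finset.mem_Icc] at hs
  rw [← Finset.sum_mul, wilkW_sum hm (m + 1 - s) (by omega) (by omega)]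
  congr 2
  rw [Nat.cast_sub (by omega)]
  push_cast
  ring

lemma logfact_eq {n m k : ℕ} (hk1 : 1 ≤ k) (hk : k ≤ m - 1) (hm : 2 ≤ m) (hmn : m ≤ n) :
    Real.log ((Nat.factorial (n - k + 1) : ℝ)) - Real.log ((Nat.factorial (n - m) : ℝ))
      = ∑ s ∈ Icc 1 (m - k + 1), Real.log (((n - m + s : ℕ) : ℝ)) := by
  have hkm : k ≤ m := by omega
  have hfac : Nat.factorial (n - k + 1)
      = Nat.factorial (n - m) * ∏ i ∈ Ico (n - m + 1) (n - k + 2), i := by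
    have h1 : (∏ i ∈ Ico 1 (n - k + 1 + 1), i) = Nat.factorial (n - k + 1) :=
      Finset.prod_Ico_id_eq_factorial _
    have h2 : (∏ i ∈ Ico 1 (n - m + 1), i) = Nat.factorial (n - m) :=
      Finset.prod_Ico_id_eq_factorial _
    have h3 := Finset.prod_Ico_consecutive (fun i : ℕ => i)
      (by omega : 1 ≤ n - m + 1) (by omega : n - m + 1 ≤ n - k + 2)
    have hnk : n - k + 1 + 1 = n - k + 2 := by omega
    rw [hnk] at h1
    rw [← h1, ← h3, h2]
  rw [hfac]
  push_cast
  rw [Real.log_mul (by positivity) ?hne]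
  case hne =>
    apply Finset.prod_ne_zero_iff.mpr
    intro i hi
    rw [Finset.mem_Ico] at hi
    have : (0 : ℝ) < i := by
      have : 1 ≤ i := by omega
      exact_mod_cast this
    exact ne_of_gt this
  rw [Real.log_prod]
  swap
  · intro i hi
    rw [Finset.mem_Ico] at hi
    have : (0 : ℝ) < i := by
      have : 1 ≤ i := by omega
      exact_mod_cast this
    exact ne_of_gt this
  have hre : ∑ i ∈ Ico (n - m + 1) (n - k + 2), Real.log (i : ℝ)
      = ∑ s ∈ Icc 1 (m - k + 1), Real.log (((n - m + s : ℕ) : ℝ)) := by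
    rw [Finset.sum_Ico_eq_sum_range]
    have : Icc 1 (m - k + 1) = Ico 1 (m - k + 2) := by
      exact (Finset.Ico_add_one_right_eq_Icc ..).symm
    rw [this, Finset.sum_Ico_eq_sum_range]
    have he1 : n - k + 2 - (n - m + 1) = m - k + 1 := by omega
    have he2 : m - k + 2 - 1 = m - k + 1 := by omega
    rw [he1, he2]
    apply Finset.sum_congr rfl
    intro i _
    congr 1
    push_cast
    ring
  rw [hre]
  push_cast
  ring

/-- The generalized Wilkinson function
`f(m,t) = √((2+t)·(3+t)^{1/2}·(4+t)^{1/3}···(m+t)^{1/(m−1)})`. -/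
noncomputable def genWilkinson (m : ℕ) (t : ℝ) : ℝ :=
  Real.sqrt (∏ k ∈ Finset.Icc 2 m, ((k : ℝ) + t) ^ ((1 : ℝ) / ((k : ℝ) - 1)))

/-- core combinatorial inequality of the GERCP column
growth proof.  If positive reals `c_1,…,c_n` satisfy, for all
`1 ≤ k ≤ m ≤ n`,
`∏_{j=k}^m c_j ≤ τ^{m−k}·√((n−k+1)!/(n−m)!)·c_k^{m−k+1}`,
then for every `1 < m ≤ n`,
`c_m/c_1 ≤ √(n−m+1)·f(m,n−m)·τ·(m−1)^{ln τ}`. -/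
theorem stmt13 (n : ℕ) (hn : 1 ≤ n) (τ : ℝ) (hτ : 1 ≤ τ)
    (c : ℕ → ℝ) (hc : ∀ i, 1 ≤ i → i ≤ n → 0 < c i)
    (hyp : ∀ k m : ℕ, 1 ≤ k → k ≤ m → m ≤ n →
      ∏ j ∈ Finset.Icc k m, c j ≤
        τ ^ (m - k) * Real.sqrt ((Nat.factorial (n - k + 1) : ℝ) /
          (Nat.factorial (n - m) : ℝ)) * c k ^ (m - k + 1)) :
    ∀ m : ℕ, 1 < m → m ≤ n →
      c m / c 1 ≤ Real.sqrt ((n - m + 1 : ℕ) : ℝ) * genWilkinson m ((n - m : ℕ) : ℝ) *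
        τ * ((m : ℝ) - 1) ^ Real.log τ := by
  intro m hm1 hmn
  have hm : 2 ≤ m := hm1
  have hτ0 : (0 : ℝ) < τ := lt_of_lt_of_le one_pos hτ
  set x : ℕ → ℝ := fun j => Real.log (c j) with hxdef
  -- Step 1: the logarithmic form of the hypothesis
  have hlog : ∀ k, 1 ≤ k → k ≤ m - 1 →
      (∑ j ∈ Icc (k + 1) m, x j) - ((m : ℝ) - k) * x k
        ≤ ((m : ℝ) - k) * Real.log τ +
          (1 / 2) * (Real.log ((Nat.factorial (n - k + 1) : ℝ))
            - Real.log ((Nat.factorial (n - m) : ℝ))) := by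
    intro k hk1 hk
    have hkm : k ≤ m := by omega
    have hckpos : 0 < c k := hc k hk1 (by omega)
    have hmem : ∀ j ∈ Icc k m, 0 < c j := by
      intro j hj; rw [Finset.mem_Icc] at hj; exact hc j (by omega) (by omega)
    have hprod : 0 < ∏ j ∈ Icc k m, c j := Finset.prod_pos hmem
    have hf1 : (0 : ℝ) < (Nat.factorial (n - k + 1) : ℝ) := by
      exact_mod_cast Nat.factorial_pos _
    have hf2 : (0 : ℝ) < (Nat.factorial (n - m) : ℝ) := by
      exact_mod_cast Nat.factorial_pos _
    have hD : (0 : ℝ) < (Nat.factorial (n - k + 1) : ℝ) / (Nat.factorial (n - m) : ℝ) :=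
      div_pos hf1 hf2
    have hrhs : (0 : ℝ) < τ ^ (m - k) * Real.sqrt ((Nat.factorial (n - k + 1) : ℝ) /
        (Nat.factorial (n - m) : ℝ)) * c k ^ (m - k + 1) := by
      have := Real.sqrt_pos.mpr hD
      positivity
    have h := hyp k m hk1 hkm hmn
    have hloge := (Real.log_le_log_iff hprod hrhs).mpr h
    rw [Real.log_prod (fun j hj => ne_of_gt (hmem j hj))] at hloge
    rw [Real.log_mul (by positivity) (ne_of_gt (pow_pos hckpos _)),
      Real.log_mul (ne_of_gt (pow_pos hτ0 _)) (ne_of_gt (Real.sqrt_pos.mpr hD)),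
      Real.log_pow, Real.log_pow, Real.log_sqrt hD.le,
      Real.log_div (ne_of_gt hf1) (ne_of_gt hf2)] at hloge
    have hsplitb : ∑ j ∈ Icc k m, Real.log (c j)
        = Real.log (c k) + ∑ j ∈ Icc (k + 1) m, Real.log (c j) := by
      rw [← Finset.Ioc_insert_left hkm, Finset.sum_insert (by simp), ← Finset.Icc_add_one_left_eq_Ioc]
    rw [hsplitb] at hloge
    have hcast : ((m - k : ℕ) : ℝ) = (m : ℝ) - k := Nat.cast_sub hkm
    rw [hcast] at hloge
    have hcast2 : ((m - k + 1 : ℕ) : ℝ) = (m : ℝ) - k + 1 := by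
      push_cast [Nat.cast_sub hkm]; ring
    rw [hcast2] at hloge
    simp only [hxdef]
    linarith
  -- Step 2: weighted combination
  have key : x m - x 1 ≤ ∑ k ∈ Icc 1 (m - 1), wilkW m k *
      (((m : ℝ) - k) * Real.log τ +
        (1 / 2) * (Real.log ((Nat.factorial (n - k + 1) : ℝ))
          - Real.log ((Nat.factorial (n - m) : ℝ)))) := by
    rw [← wilk_identity hm x]
    apply Finset.sum_le_sum
    intro k hk
    rw [Finset.mem_Icc] at hk
    exact mul_le_mul_of_nonneg_left (hlog k hk.1 hk.2) (wilkW_pos hm hk.1 hk.2).le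
  -- Step 3: split the right-hand side
  have hsplitRHS : ∑ k ∈ Icc 1 (m - 1), wilkW m k *
      (((m : ℝ) - k) * Real.log τ +
        (1 / 2) * (Real.log ((Nat.factorial (n - k + 1) : ℝ))
          - Real.log ((Nat.factorial (n - m) : ℝ))))
      = (∑ k ∈ Icc 1 (m - 1), wilkW m k * ((m : ℝ) - k)) * Real.log τ
        + (1 / 2) * ∑ k ∈ Icc 1 (m - 1), wilkW m k *
            (Real.log ((Nat.factorial (n - k + 1) : ℝ))
              - Real.log ((Nat.factorial (n - m) : ℝ))) := by
    rw [Finset.sum_mul, Finset.mul_sum, ← Finset.sum_add_distrib]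
    apply Finset.sum_congr rfl
    intro k _
    ring
  -- Step 4: factorial part
  set g : ℕ → ℝ := fun s => Real.log (((n - m + s : ℕ) : ℝ)) with hgdef
  have hB : ∑ k ∈ Icc 1 (m - 1), wilkW m k *
      (Real.log ((Nat.factorial (n - k + 1) : ℝ))
        - Real.log ((Nat.factorial (n - m) : ℝ)))
      = g 1 + ∑ s ∈ Icc 2 m, (1 / ((s : ℝ) - 1)) * g s := by
    rw [← wilk_Lswap hm g]
    apply Finset.sum_congr rfl
    intro k hk
    rw [Finset.mem_Icc] at hk
    rw [logfact_eq hk.1 hk.2 hm hmn]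
  -- Step 5: positivity of the target pieces
  have htpos : (0 : ℝ) < ((n - m + 1 : ℕ) : ℝ) := by
    have : 1 ≤ n - m + 1 := by omega
    exact_mod_cast this
  have hprodpos : (0 : ℝ) < ∏ k ∈ Icc 2 m, ((k : ℝ) + ((n - m : ℕ) : ℝ)) ^
      ((1 : ℝ) / ((k : ℝ) - 1)) := by
    apply Finset.prod_pos
    intro k hk
    rw [Finset.mem_Icc] at hk
    have hk2 : (2 : ℝ) ≤ (k : ℝ) := by exact_mod_cast hk.1
    have ht0 : (0 : ℝ) ≤ ((n - m : ℕ) : ℝ) := Nat.cast_nonneg _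
    exact Real.rpow_pos_of_pos (by linarith) _
  have hfpos : 0 < genWilkinson m ((n - m : ℕ) : ℝ) :=
    Real.sqrt_pos.mpr hprodpos
  have hm1pos : (0 : ℝ) < (m : ℝ) - 1 := by
    have : (2 : ℝ) ≤ (m : ℝ) := by exact_mod_cast hm
    linarith
  have hrpos : (0 : ℝ) < ((m : ℝ) - 1) ^ Real.log τ := Real.rpow_pos_of_pos hm1pos _
  have hRpos : (0 : ℝ) < Real.sqrt ((n - m + 1 : ℕ) : ℝ) * genWilkinson m ((n - m : ℕ) : ℝ)
      * τ * ((m : ℝ) - 1) ^ Real.log τ := by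
    have := Real.sqrt_pos.mpr htpos
    positivity
  -- Step 6: log of the target
  have hlogR : Real.log (Real.sqrt ((n - m + 1 : ℕ) : ℝ) * genWilkinson m ((n - m : ℕ) : ℝ)
      * τ * ((m : ℝ) - 1) ^ Real.log τ)
      = (1 / 2) * g 1 + (1 / 2) * (∑ s ∈ Icc 2 m, (1 / ((s : ℝ) - 1)) * g s)
        + Real.log τ + Real.log τ * Real.log ((m : ℝ) - 1) := by
    rw [Real.log_mul (by positivity) (ne_of_gt hrpos),
      Real.log_mul (by positivity) (ne_of_gt hτ0),
      Real.log_mul (ne_of_gt (Real.sqrt_pos.mpr htpos)) (ne_of_gt hfpos)]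
    rw [Real.log_sqrt htpos.le]
    rw [genWilkinson, Real.log_sqrt hprodpos.le]
    rw [Real.log_prod (fun k hk => by
      rw [Finset.mem_Icc] at hk
      have hk2 : (2 : ℝ) ≤ (k : ℝ) := by exact_mod_cast hk.1
      have ht0 : (0 : ℝ) ≤ ((n - m : ℕ) : ℝ) := Nat.cast_nonneg _
      exact ne_of_gt (Real.rpow_pos_of_pos (by linarith) _))]
    rw [Real.log_rpow hm1pos]
    have hsum : ∑ k ∈ Icc 2 m, Real.log (((k : ℝ) + ((n - m : ℕ) : ℝ)) ^
        ((1 : ℝ) / ((k : ℝ) - 1))) = ∑ s ∈ Icc 2 m, (1 / ((s : ℝ) - 1)) * g s := by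
      apply Finset.sum_congr rfl
      intro k hk
      rw [Finset.mem_Icc] at hk
      have hk2 : (2 : ℝ) ≤ (k : ℝ) := by exact_mod_cast hk.1
      have ht0 : (0 : ℝ) ≤ ((n - m : ℕ) : ℝ) := Nat.cast_nonneg _
      rw [Real.log_rpow (by linarith)]
      simp only [hgdef]
      congr 2
      push_cast
      ring
    rw [hsum]
    have hg1 : g 1 = Real.log ((n - m + 1 : ℕ) : ℝ) := rfl
    rw [hg1]
    ring
  -- Step 7: conclude
  have hlogmain : Real.log (c m / c 1) ≤ Real.log
      (Real.sqrt ((n - m + 1 : ℕ) : ℝ) * genWilkinson m ((n - m : ℕ) : ℝ)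
        * τ * ((m : ℝ) - 1) ^ Real.log τ) := by
    have hc1 : 0 < c 1 := hc 1 le_rfl hn
    have hcm : 0 < c m := hc m (by omega) hmn
    rw [Real.log_div (ne_of_gt hcm) (ne_of_gt hc1), hlogR]
    have hA := wilk_partA (m := m) hm
    have hlogτ : 0 ≤ Real.log τ := Real.log_nonneg hτ
    have hAineq : (∑ k ∈ Icc 1 (m - 1), wilkW m k * ((m : ℝ) - k)) * Real.log τ
        ≤ (1 + Real.log ((m : ℝ) - 1)) * Real.log τ :=
      mul_le_mul_of_nonneg_right hA hlogτ
    have := key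
    rw [hsplitRHS, hB] at this
    simp only [hxdef] at this
    nlinarith [this, hAineq]
  have hc1 : 0 < c 1 := hc 1 le_rfl hn
  have hcm : 0 < c m := hc m (by omega) hmn
  exact (Real.log_le_log_iff (div_pos hcm hc1) hRpos).mp hlogmain
end

section
/- Let n ≥ 1 and let B ∈ ℝ^{n×n} be the upper triangular matrix with B(i,i) = 1, B(i,j) = −1/(n−i+1) for i < j, and B(i,j) = 0 for i > j. Then B is invertible and its inverse is the upper triangular matrix C with C(i,i) = 1, C(i,j) = 1/(n−j+2) for i < j, and C(i,j) = 0 for i > j; that is, B·C = C·B = I. -/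
/-- special matrix inverse.
Let `B ∈ ℝ^{n×n}` be upper triangular with `B(i,i) = 1` and
`B(i,j) = −1/(n−i+1)` for `i < j` (with 1-based indexing, i.e.
`−1/(n − i.val)` for 0-based `i`).  Then `B` is invertible with inverse the
upper triangular matrix `C` with `C(i,i) = 1` and `C(i,j) = 1/(n−j+2)` for
`i < j` (0-based: `1/(n − j.val + 1)`); i.e. `B·C = C·B = 1`. -/
theorem stmt15 (n : ℕ) (hn : 1 ≤ n) (B C : Matrix (Fin n) (Fin n) ℝ)
    (hB : ∀ i j, B i j =
      if i = j then 1 else if i < j then -1 / ((n : ℝ) - i.val) else 0)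
    (hC : ∀ i j, C i j =
      if i = j then 1 else if i < j then 1 / ((n : ℝ) - j.val + 1) else 0) :
    IsUnit B ∧ B * C = 1 ∧ C * B = 1 := by
  have hBC : B * C = 1 := by
    ext i j
    rw [Matrix.mul_apply]
    simp only [hB, hC, Matrix.one_apply]
    set f : Fin n → ℝ := fun k =>
      (if i = k then 1 else if i < k then -1 / ((n : ℝ) - i.val) else 0) *
      (if k = j then 1 else if k < j then 1 / ((n : ℝ) - j.val + 1) else 0) with hf
    rcases lt_trichotomy i j with hij | rfl | hij
    · rw [if_neg hij.ne]
      have hin : (i : ℕ) < n := i.isLt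
      have hjn : (j : ℕ) < n := j.isLt
      have hd1 : (n : ℝ) - i.val ≠ 0 := by
        have : (i.val : ℝ) < n := by exact_mod_cast hin
        linarith
      have hd2 : (n : ℝ) - j.val + 1 ≠ 0 := by
        have : (j.val : ℝ) < n := by exact_mod_cast hjn
        linarith
      have hzero : ∀ k ∈ Finset.univ, k ∉ Finset.Icc i j → f k = 0 := by
        intro k _ hk
        rw [Finset.mem_Icc, not_and_or] at hk
        rcases hk with hk | hk
        · push_neg at hk
          rw [hf]
          simp only
          rw [if_neg (by omega : ¬ i = k), if_neg (by omega : ¬ i < k), zero_mul]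
        · push_neg at hk
          rw [hf]
          simp only
          rw [if_neg (by omega : ¬ k = j), if_neg (by omega : ¬ k < j), mul_zero]
      rw [← Finset.sum_subset (Finset.subset_univ (Finset.Icc i j)) hzero,
        ← Finset.Ioc_insert_left hij.le,
        Finset.sum_insert (by simp),
        ← Finset.Ioo_insert_right hij,
        Finset.sum_insert (by simp)]
      have hconst : ∀ k ∈ Finset.Ioo i j, f k =
          (-1 / ((n : ℝ) - i.val)) * (1 / ((n : ℝ) - j.val + 1)) := by
        intro k hk
        rw [Finset.mem_Ioo] at hk
        rw [hf]
        simp only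
        rw [if_neg hk.1.ne, if_pos hk.1, if_neg hk.2.ne, if_pos hk.2]
      rw [Finset.sum_congr rfl hconst, Finset.sum_const, Fin.card_Ioo, nsmul_eq_mul]
      rw [hf]
      simp only [if_pos rfl, if_neg hij.ne, if_pos hij, if_neg (Ne.symm hij.ne), if_true]
      have hcast : ((j.val - i.val - 1 : ℕ) : ℝ) = (j.val : ℝ) - i.val - 1 := by
        have : (i : ℕ) < j := hij
        push_cast [Nat.sub_sub]
        rw [Nat.cast_sub (by omega)]
        push_cast
        ring
      rw [hcast]
      field_simp
      ring
    · rw [if_pos rfl]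
      rw [Finset.sum_eq_single i]
      · simp
      · intro k _ hk
        rcases lt_or_gt_of_ne hk with h | h
        · rw [if_neg (ne_of_gt h), if_neg (not_lt.2 h.le), zero_mul]
        · rw [if_neg (ne_of_gt h), if_neg h.not_gt, mul_zero]
      · simp
    · rw [if_neg hij.ne']
      apply Finset.sum_eq_zero
      intro k _
      rcases le_or_gt i k with h | h
      · have h1 : ¬ k = j := by omega
        have h2 : ¬ k < j := by omega
        rw [if_neg h1, if_neg h2, mul_zero]
      · rw [if_neg (ne_of_gt h), if_neg h.not_gt, zero_mul]
  have hCB : C * B = 1 := mul_eq_one_comm.mp hBC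
  exact ⟨⟨⟨B, C, hBC, hCB⟩, rfl⟩, hBC, hCB⟩
end

section
/- Let m ≥ 2 be an integer and t ≥ 0 a real number, and let f(m,t) = √( (2+t)·(3+t)^{1/2}·(4+t)^{1/3} ··· (m+t)^{1/(m−1)} ). Then f(m,t) ≤ √(e·(t+2)·(t+1)) · m^{(1/4)·ln(m+t)} · m^{(1/4)·ln((m+t)/m)} · (t+1)^{(1/4)·ln(t+1)}. -/
open Real Finset MeasureTheory intervalIntegral

private lemma sqrt_exp_half (l : ℝ) : Real.sqrt (Real.exp l) = Real.exp (l / 2) := by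
  rw [show Real.exp l = Real.exp (l / 2) ^ 2 by
    rw [sq, ← Real.exp_add]; congr 1; ring]
  exact Real.sqrt_sq (Real.exp_pos _).le

private lemma majorant_integrable (A B C : ℝ) {x y : ℝ} (hx : 0 < x) (hxy : x ≤ y) :
    IntervalIntegrable (fun u => (A + B * Real.log u) / u + C / u ^ 2) volume x y := by
  apply ContinuousOn.intervalIntegrable
  have hsub : Set.uIcc x y ⊆ {z : ℝ | z ≠ 0} := by
    rw [Set.uIcc_of_le hxy]
    intro z hz
    exact (lt_of_lt_of_le hx hz.1).ne'
  apply ContinuousOn.add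
  · exact (continuousOn_const.add
      (continuousOn_const.mul (Real.continuousOn_log.mono hsub))).div
      continuousOn_id (fun z hz => hsub hz)
  · exact continuousOn_const.div ((continuous_pow 2).continuousOn)
      (fun z hz => pow_ne_zero _ (hsub hz))

private lemma integral_ftc (A B C : ℝ) {x y : ℝ} (hx : 0 < x) (hxy : x ≤ y) :
    ∫ u in x..y, ((A + B * Real.log u) / u + C / u ^ 2) =
      (A * Real.log y + B * Real.log y ^ 2 / 2 - C / y)
        - (A * Real.log x + B * Real.log x ^ 2 / 2 - C / x) := by
  apply intervalIntegral.integral_eq_sub_of_hasDerivAt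
  · intro u hu
    rw [Set.uIcc_of_le hxy] at hu
    have hu0 : 0 < u := lt_of_lt_of_le hx hu.1
    have hlog : HasDerivAt Real.log u⁻¹ u := Real.hasDerivAt_log hu0.ne'
    have h1 : HasDerivAt (fun v => A * Real.log v) (A * u⁻¹) u := hlog.const_mul A
    have h2 : HasDerivAt (fun v => Real.log v ^ 2) (2 * Real.log u ^ 1 * u⁻¹) u := hlog.pow 2
    have h2' : HasDerivAt (fun v => B * Real.log v ^ 2 / 2)
        (B / 2 * (2 * Real.log u ^ 1 * u⁻¹)) u := by
      have h := h2.const_mul (B / 2)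
      exact h.congr_of_eventuallyEq (Filter.Eventually.of_forall fun v => by ring)
    have h3 : HasDerivAt (fun v : ℝ => C / v) (C * -(u ^ 2)⁻¹) u := by
      simpa [div_eq_mul_inv] using (hasDerivAt_inv hu0.ne').const_mul C
    have h4 := (h1.add h2').sub h3
    convert h4 using 1
    · rfl
    field_simp
    ring
  · exact majorant_integrable A B C hx hxy

private lemma log_div_antitone {s : ℝ} (hs : 1 ≤ s) :
    AntitoneOn (fun u => Real.log (u + s) / u) (Set.Ici 1) := by
  intro u hu v hv huv
  simp only [Set.mem_Ici] at hu hv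
  have hu0 : (0:ℝ) < u := by linarith
  have hv0 : (0:ℝ) < v := by linarith
  have hus : (0:ℝ) < u + s := by linarith
  have hvs : (0:ℝ) < v + s := by linarith
  simp only
  rw [div_le_div_iff₀ hv0 hu0]
  -- goal : log (v+s) * u ≤ log (u+s) * v
  have h1 : Real.log (v + s) ≤ Real.log (u + s) + (v - u) / (u + s) := by
    have h10 := Real.log_le_sub_one_of_pos (show 0 < (v + s) / (u + s) by positivity)
    rw [Real.log_div hvs.ne' hus.ne'] at h10
    have h11 : (v + s) / (u + s) - 1 = (v - u) / (u + s) := by field_simp; ring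
    linarith
  have h2 : u / (u + s) ≤ Real.log (u + s) := by
    by_cases he : Real.exp 1 ≤ u + s
    · have h3 : (1:ℝ) ≤ Real.log (u + s) := by
        rw [Real.le_log_iff_exp_le hus]; simpa using he
      have h4 : u / (u + s) ≤ 1 := by rw [div_le_one hus]; linarith
      linarith
    · push_neg at he
      have hl2 := Real.log_two_gt_d9
      have he9 := Real.exp_one_lt_d9
      have hlog : Real.log 2 ≤ Real.log (u + s) := Real.log_le_log (by norm_num) (by linarith)
      rw [div_le_iff₀ hus]
      have hub : u ≤ 1.7182818286 := by nlinarith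
      have hp : (0.6931471803 : ℝ) * (u + 1) ≤ Real.log (u + s) * (u + s) := by
        apply mul_le_mul (by linarith) (by linarith) (by linarith) (by linarith)
      nlinarith
  have h3 : (v - u) * (u / (u + s)) ≤ (v - u) * Real.log (u + s) :=
    mul_le_mul_of_nonneg_left h2 (by linarith)
  have h4 : Real.log (v + s) * u ≤ (Real.log (u + s) + (v - u) / (u + s)) * u :=
    mul_le_mul_of_nonneg_right h1 hu0.le
  have h5 : (Real.log (u + s) + (v - u) / (u + s)) * u
      = Real.log (u + s) * u + (v - u) * (u / (u + s)) := by ring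
  have h6 : Real.log (u + s) * u + (v - u) * Real.log (u + s) = Real.log (u + s) * v := by ring
  linarith

set_option maxHeartbeats 1000000 in
/-- generalized Wilkinson function bound.
For an integer `m ≥ 2` and a real `t ≥ 0`,
`f(m,t) ≤ √(e·(t+2)·(t+1)) · m^{(1/4)ln(m+t)} · m^{(1/4)ln((m+t)/m)} ·
(t+1)^{(1/4)ln(t+1)}`. -/
theorem stmt16 (m : ℕ) (hm : 2 ≤ m) (t : ℝ) (ht : 0 ≤ t) :
    genWilkinson m t ≤
      Real.sqrt (Real.exp 1 * (t + 2) * (t + 1)) *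
        (m : ℝ) ^ ((1 / 4 : ℝ) * Real.log ((m : ℝ) + t)) *
        (m : ℝ) ^ ((1 / 4 : ℝ) * Real.log (((m : ℝ) + t) / m)) *
        (t + 1) ^ ((1 / 4 : ℝ) * Real.log (t + 1)) := by
  have hm2 : (2:ℝ) ≤ m := by exact_mod_cast hm
  have hm0 : (0:ℝ) < m := by linarith
  have hs : (1:ℝ) ≤ t + 1 := by linarith
  set a := Real.log m with ha_def
  set b := Real.log (t + 1) with hb_def
  set c := Real.log ((m:ℝ) + t) with hc_def
  set Q : ℝ := Real.log (t + 2) + 1 + b + a * c - a ^ 2 / 2 + b ^ 2 / 2 with hQ_def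
  -- basic facts
  have ha0 : 0 ≤ a := Real.log_nonneg (by linarith)
  have hb0 : 0 ≤ b := Real.log_nonneg hs
  have hac : a ≤ c := Real.log_le_log hm0 (by linarith)
  -- the key sum bound
  have key : ∑ k ∈ Finset.Icc 2 m, (1 / ((k:ℝ) - 1)) * Real.log ((k:ℝ) + t) ≤ Q := by
    set n := m - 2 with hn_def
    set f : ℝ → ℝ := fun u => Real.log (u + (t + 1)) / u with hf_def
    set N : ℝ := 1 + (n : ℝ) with hN_def
    have hNm : N = (m:ℝ) - 1 := by
      rw [hN_def, hn_def]
      have hc2 : ((m - 2 : ℕ) : ℝ) = (m:ℝ) - 2 := by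
        rw [Nat.cast_sub hm]; norm_num
      rw [hc2]; ring
    have hN1 : (1:ℝ) ≤ N := by rw [hNm]; linarith
    -- rewrite the sum
    have hsum : ∑ k ∈ Finset.Icc 2 m, (1 / ((k:ℝ) - 1)) * Real.log ((k:ℝ) + t)
        = Real.log (2 + t) + ∑ i ∈ Finset.range n, f (1 + ((i + 1 : ℕ) : ℝ)) := by
      have hmem : 2 ∈ Finset.Icc 2 m := Finset.mem_Icc.2 ⟨le_rfl, hm⟩
      rw [← Finset.insert_erase hmem, Finset.sum_insert (Finset.notMem_erase _ _),
        Finset.Icc_erase_left, ← Finset.Icc_add_one_left_eq_Ioc]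
      congr 1
      · norm_num
      · rw [show Finset.Icc (2 + 1) m = Finset.Ico 3 (m + 1) by
            rw [Finset.Ico_add_one_right_eq_Icc],
          Finset.sum_Ico_eq_sum_range, show m + 1 - 3 = n by omega]
        apply Finset.sum_congr rfl
        intro i _
        rw [hf_def]
        simp only
        push_cast
        rw [show (3:ℝ) + ↑i + t = 1 + (↑i + 1) + (t + 1) by ring]
        rw [show (3:ℝ) + ↑i - 1 = 1 + (↑i + 1) by ring]
        ring
    -- sum ≤ integral
    have hanti : AntitoneOn f (Set.Icc 1 (1 + (n:ℝ))) :=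
      (log_div_antitone hs).mono (Set.Icc_subset_Ici_self)
    have hSI : ∑ i ∈ Finset.range n, f (1 + ((i + 1 : ℕ) : ℝ)) ≤ ∫ x in (1:ℝ)..N, f x := by
      rw [hN_def]
      exact hanti.sum_le_integral
    -- integrability of f on subintervals of [1, N]
    have hfint : ∀ x y : ℝ, 1 ≤ x → x ≤ y → IntervalIntegrable f volume x y := by
      intro x y hx hxy
      apply AntitoneOn.intervalIntegrable
      apply (log_div_antitone hs).mono
      rw [Set.uIcc_of_le hxy]
      intro z hz
      exact le_trans hx hz.1
    have hxa : Real.log N ≤ a := Real.log_le_log (by linarith) (by rw [hNm]; linarith)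
    have hx0 : 0 ≤ Real.log N := Real.log_nonneg hN1
    have hl2 : Real.log 2 ≤ 1 := by
      have := Real.log_two_lt_d9; linarith
    have hlog2s : Real.log (2 * (t + 1)) = Real.log 2 + b :=
      Real.log_mul (by norm_num) (by linarith)
    -- bound the integral, by cases
    have hIbound : ∫ x in (1:ℝ)..N, f x ≤ 1 + b + a * c - a ^ 2 / 2 + b ^ 2 / 2 := by
      rcases le_total N (t + 1) with hcase | hcase
      · -- case A : N ≤ t+1
        have hxb : Real.log N ≤ b := Real.log_le_log (by linarith) hcase
        have hmono : ∫ x in (1:ℝ)..N, f x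
            ≤ ∫ x in (1:ℝ)..N, (((Real.log 2 + b) + 0 * Real.log x) / x + 0 / x ^ 2) := by
          apply intervalIntegral.integral_mono_on hN1 (hfint 1 N le_rfl hN1)
            (majorant_integrable _ _ _ one_pos hN1)
          intro x hx
          have hx0' : (0:ℝ) < x := lt_of_lt_of_le one_pos hx.1
          rw [hf_def]
          simp only [zero_mul, add_zero, zero_div]
          gcongr
          rw [← hlog2s]
          exact Real.log_le_log (by linarith) (by linarith [hx.2])
        rw [integral_ftc (Real.log 2 + b) 0 0 one_pos hN1,
          show ((Real.log 2 + b) * Real.log N + 0 * Real.log N ^ 2 / 2 - 0 / N)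
              - ((Real.log 2 + b) * Real.log 1 + 0 * Real.log 1 ^ 2 / 2 - 0 / 1)
            = Real.log 2 * Real.log N + b * Real.log N by
              rw [Real.log_one]; ring] at hmono
        have e1 : b * Real.log N ≤ b * a := mul_le_mul_of_nonneg_left hxa hb0
        have e2 : b * a ≤ (a ^ 2 + b ^ 2) / 2 := by nlinarith [sq_nonneg (a - b)]
        have e3 : a ^ 2 ≤ a * c := by rw [pow_two]; exact mul_le_mul_of_nonneg_left hac ha0
        have e4 : Real.log 2 * Real.log N ≤ 1 * b :=
          mul_le_mul hl2 hxb hx0 (by norm_num)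
        linarith [hmono]
      · -- case B : t+1 ≤ N
        have ht1 : (0:ℝ) < t + 1 := by linarith
        have hsplit : (∫ x in (1:ℝ)..N, f x)
            = (∫ x in (1:ℝ)..(t+1), f x) + ∫ x in (t+1)..N, f x :=
          (intervalIntegral.integral_add_adjacent_intervals
            (hfint 1 (t+1) le_rfl hs) (hfint (t+1) N hs hcase)).symm
        have hI1 : (∫ x in (1:ℝ)..(t+1), f x) ≤ (Real.log 2 + b) * b := by
          have hmono : (∫ x in (1:ℝ)..(t+1), f x)
              ≤ ∫ x in (1:ℝ)..(t+1), (((Real.log 2 + b) + 0 * Real.log x) / x + 0 / x ^ 2) := by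
            apply intervalIntegral.integral_mono_on hs (hfint 1 (t+1) le_rfl hs)
              (majorant_integrable _ _ _ one_pos hs)
            intro x hx
            have hx0' : (0:ℝ) < x := lt_of_lt_of_le one_pos hx.1
            rw [hf_def]
            simp only [zero_mul, add_zero, zero_div]
            gcongr
            rw [← hlog2s]
            exact Real.log_le_log (by linarith) (by linarith [hx.2])
          rw [integral_ftc (Real.log 2 + b) 0 0 one_pos hs,
            show ((Real.log 2 + b) * Real.log (t+1) + 0 * Real.log (t+1) ^ 2 / 2 - 0 / (t+1))
                - ((Real.log 2 + b) * Real.log 1 + 0 * Real.log 1 ^ 2 / 2 - 0 / 1)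
              = (Real.log 2 + b) * Real.log (t+1) by
                rw [Real.log_one]; ring] at hmono
          rw [← hb_def] at hmono
          exact hmono
        have hI2 : (∫ x in (t+1)..N, f x)
            ≤ Real.log N ^ 2 / 2 - (t+1) / N - b ^ 2 / 2 + 1 := by
          have hmono : (∫ x in (t+1)..N, f x)
              ≤ ∫ x in (t+1)..N, ((0 + 1 * Real.log x) / x + (t+1) / x ^ 2) := by
            apply intervalIntegral.integral_mono_on hcase (hfint (t+1) N hs hcase)
              (majorant_integrable _ _ _ ht1 hcase)
            intro x hx
            have hx0' : (0:ℝ) < x := lt_of_lt_of_le ht1 hx.1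
            have hlg : Real.log (x + (t+1)) ≤ Real.log x + (t+1) / x := by
              have h := Real.log_le_sub_one_of_pos
                (show 0 < (x + (t+1)) / x by positivity)
              rw [Real.log_div (by positivity) hx0'.ne'] at h
              have h' : (x + (t+1)) / x - 1 = (t+1) / x := by field_simp; ring
              linarith
            rw [hf_def]
            simp only
            calc Real.log (x + (t+1)) / x ≤ (Real.log x + (t+1) / x) / x := by gcongr
            _ = (0 + 1 * Real.log x) / x + (t+1) / x ^ 2 := by field_simp; ring
          rw [integral_ftc 0 1 (t+1) ht1 hcase,
            show (0 * Real.log N + 1 * Real.log N ^ 2 / 2 - (t+1) / N)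
                - (0 * Real.log (t+1) + 1 * Real.log (t+1) ^ 2 / 2 - (t+1) / (t+1))
              = Real.log N ^ 2 / 2 - (t+1) / N - Real.log (t+1) ^ 2 / 2 + 1 by
                rw [div_self ht1.ne']; ring] at hmono
          rw [← hb_def] at hmono
          exact hmono
        have e1 : Real.log 2 * b ≤ 1 * b := mul_le_mul_of_nonneg_right hl2 hb0
        have e2 : Real.log N ^ 2 ≤ a ^ 2 := pow_le_pow_left₀ hx0 hxa 2
        have e3 : a ^ 2 ≤ a * c := by rw [pow_two]; exact mul_le_mul_of_nonneg_left hac ha0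
        have e4 : (0:ℝ) ≤ (t+1) / N := by positivity
        have e5 : (Real.log 2 + b) * b = Real.log 2 * b + b ^ 2 := by ring
        rw [hsplit]
        linarith [hI1, hI2]
    rw [hsum]
    have hcomm : Real.log (2 + t) = Real.log (t + 2) := by rw [add_comm]
    rw [hQ_def, hcomm]
    linarith [le_trans hSI hIbound]
  -- now assemble
  have hPpos : 0 < ∏ k ∈ Finset.Icc 2 m, ((k : ℝ) + t) ^ ((1 : ℝ) / ((k : ℝ) - 1)) := by
    apply Finset.prod_pos
    intro k hk
    have hk2 : 2 ≤ k := (Finset.mem_Icc.1 hk).1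
    have : (2:ℝ) ≤ k := by exact_mod_cast hk2
    exact Real.rpow_pos_of_pos (by linarith) _
  have hlogP : Real.log (∏ k ∈ Finset.Icc 2 m, ((k : ℝ) + t) ^ ((1 : ℝ) / ((k : ℝ) - 1)))
      = ∑ k ∈ Finset.Icc 2 m, (1 / ((k:ℝ) - 1)) * Real.log ((k:ℝ) + t) := by
    rw [Real.log_prod]
    · apply Finset.sum_congr rfl
      intro k hk
      have hk2 : 2 ≤ k := (Finset.mem_Icc.1 hk).1
      have : (2:ℝ) ≤ k := by exact_mod_cast hk2
      exact Real.log_rpow (by linarith) _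
    · intro k hk
      have hk2 : 2 ≤ k := (Finset.mem_Icc.1 hk).1
      have : (2:ℝ) ≤ k := by exact_mod_cast hk2
      exact (Real.rpow_pos_of_pos (by linarith) _).ne'
  have hPle : (∏ k ∈ Finset.Icc 2 m, ((k : ℝ) + t) ^ ((1 : ℝ) / ((k : ℝ) - 1)))
      ≤ Real.exp Q := by
    rw [← Real.exp_log hPpos]
    apply Real.exp_le_exp.2
    rw [hlogP]
    exact key
  have hRHS : Real.sqrt (Real.exp 1 * (t + 2) * (t + 1)) *
        (m : ℝ) ^ ((1 / 4 : ℝ) * Real.log ((m : ℝ) + t)) *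
        (m : ℝ) ^ ((1 / 4 : ℝ) * Real.log (((m : ℝ) + t) / m)) *
        (t + 1) ^ ((1 / 4 : ℝ) * Real.log (t + 1)) = Real.exp (Q / 2) := by
    have h1 : Real.exp 1 * (t + 2) * (t + 1)
        = Real.exp (1 + Real.log (t + 2) + Real.log (t + 1)) := by
      rw [Real.exp_add, Real.exp_add, Real.exp_log (by linarith), Real.exp_log (by linarith)]
    have hdiv : Real.log (((m:ℝ) + t) / m) = c - a := by
      rw [Real.log_div (by linarith) hm0.ne']
    rw [h1, sqrt_exp_half,
      Real.rpow_def_of_pos hm0, Real.rpow_def_of_pos hm0,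
      Real.rpow_def_of_pos (show (0:ℝ) < t + 1 by linarith), hdiv,
      ← Real.exp_add, ← Real.exp_add, ← Real.exp_add]
    congr 1
    rw [hQ_def, ← hb_def, ← hc_def, ← ha_def]
    ring
  rw [genWilkinson, hRHS, ← sqrt_exp_half]
  exact Real.sqrt_le_sqrt hPle
end

section
/- For every real c ≥ 1, the improper integral ∫_1^∞ (c·ln(x))/(x·(x+c)) dx is at most (1/2)·ln²(c) + ln(c) + 1. -/
open MeasureTheory

lemma aux_hd1 {x : ℝ} (hx : 0 < x) :
    HasDerivAt (fun y : ℝ => Real.log y ^ 2 / 2) (Real.log x / x) x := by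
  have h := ((Real.hasDerivAt_log hx.ne').pow 2).div_const 2
  refine h.congr_deriv ?_
  field_simp
  ring

lemma aux_hd2 {c x : ℝ} (hc : 0 < c) (hx : 0 < x) :
    HasDerivAt (fun y : ℝ => -(c * (Real.log y + 1)) / y)
      (c * Real.log x / x ^ 2) x := by
  have hl : HasDerivAt (fun y : ℝ => -(c * (Real.log y + 1)))
      (-(c * x⁻¹)) x := by
    exact (((Real.hasDerivAt_log hx.ne').add_const 1).const_mul c).neg
  have h := hl.div (hasDerivAt_id x) hx.ne'
  refine h.congr_deriv ?_
  simp only [id]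
  field_simp
  ring

lemma aux_tendsto2 (c : ℝ) :
    Filter.Tendsto (fun y : ℝ => -(c * (Real.log y + 1)) / y)
      Filter.atTop (nhds 0) := by
  have h1 : Filter.Tendsto (fun y : ℝ => Real.log y / y) Filter.atTop (nhds 0) :=
    Real.isLittleO_log_id_atTop.tendsto_div_nhds_zero
  have h2 : Filter.Tendsto (fun y : ℝ => y⁻¹) Filter.atTop (nhds (0:ℝ)) :=
    tendsto_inv_atTop_zero
  have : Filter.Tendsto (fun y : ℝ => -(c * (Real.log y / y + y⁻¹)))
      Filter.atTop (nhds (-(c * ((0:ℝ) + 0)))) :=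
    ((h1.add h2).const_mul c).neg
  simp only [add_zero, zero_add, mul_zero, neg_zero] at this
  refine this.congr' ?_
  filter_upwards [Filter.eventually_gt_atTop (0:ℝ)] with y hy
  field_simp

/-- useful inequality for an improper integral.
For every real `c ≥ 1`,
`∫_1^∞ c·ln(x)/(x·(x+c)) dx ≤ (1/2)·ln²(c) + ln(c) + 1`. -/
theorem stmt17 (c : ℝ) (hc : 1 ≤ c) :
    ∫ x in Set.Ioi (1 : ℝ), c * Real.log x / (x * (x + c)) ≤
      (1 / 2) * Real.log c ^ 2 + Real.log c + 1 := by
  have hc0 : (0:ℝ) < c := lt_of_lt_of_le one_pos hc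
  set f : ℝ → ℝ := fun x => c * Real.log x / (x * (x + c)) with hf
  -- continuity of f away from 0
  have hfc : ContinuousOn f (Set.Ici (1:ℝ)) := by
    apply ContinuousOn.div
    · exact (Real.continuousOn_log.mono (by intro x hx; simp; nlinarith [hx.out])).const_smul c |>.congr (fun x _ => by simp [smul_eq_mul])
    · exact (continuousOn_id.mul (continuousOn_id.add continuousOn_const))
    · intro x hx
      have : (1:ℝ) ≤ x := hx
      positivity
  -- Integral computations for the bounding functions
  have hint1 : ∫ x in Set.Ioc (1:ℝ) c, Real.log x / x = Real.log c ^ 2 / 2 := by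
    rw [← intervalIntegral.integral_of_le hc]
    have := intervalIntegral.integral_eq_sub_of_hasDerivAt
      (f := fun y : ℝ => Real.log y ^ 2 / 2) (f' := fun y => Real.log y / y)
      (a := 1) (b := c)
      (fun x hx => aux_hd1 (by rw [Set.uIcc_of_le hc] at hx; linarith [hx.1]))
      ?_
    · rw [this]; simp
    · apply ContinuousOn.intervalIntegrable
      apply ContinuousOn.div
      · exact Real.continuousOn_log.mono (by intro x hx; rw [Set.uIcc_of_le hc] at hx; simp; linarith [hx.1])
      · exact continuousOn_id
      · intro x hx; rw [Set.uIcc_of_le hc] at hx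
        have : (0:ℝ) < x := by linarith [hx.1]
        positivity
  have hnn2 : ∀ x ∈ Set.Ioi c, 0 ≤ c * Real.log x / x ^ 2 := by
    intro x hx
    have hx1 : (1:ℝ) ≤ x := le_of_lt (lt_of_le_of_lt hc hx)
    have := Real.log_nonneg hx1
    positivity
  have hd2 : ∀ x ∈ Set.Ici c, HasDerivAt (fun y : ℝ => -(c * (Real.log y + 1)) / y)
      (c * Real.log x / x ^ 2) x := fun x hx => aux_hd2 hc0 (lt_of_lt_of_le hc0 hx)
  have hint2 : ∫ x in Set.Ioi c, c * Real.log x / x ^ 2 = Real.log c + 1 := by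
    rw [integral_Ioi_of_hasDerivAt_of_nonneg' hd2 hnn2 (aux_tendsto2 c)]
    field_simp
    ring
  have hI2 : IntegrableOn (fun x => c * Real.log x / x ^ 2) (Set.Ioi c) :=
    integrableOn_Ioi_deriv_of_nonneg' hd2 hnn2 (aux_tendsto2 c)
  -- integrability of f on the two pieces
  have hfI1 : IntegrableOn f (Set.Ioc 1 c) := by
    apply (hfc.mono (Set.Icc_subset_Ici_self)).integrableOn_Icc.mono_set Set.Ioc_subset_Icc_self
  have hfI2 : IntegrableOn f (Set.Ioi c) := by
    apply hI2.mono' ((hfc.mono (Set.Ioi_subset_Ici hc)).aestronglyMeasurable measurableSet_Ioi)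
    · filter_upwards [ae_restrict_mem measurableSet_Ioi] with x hx
      have hx1 : (1:ℝ) < x := lt_of_le_of_lt hc hx
      have hlog : 0 ≤ Real.log x := Real.log_nonneg hx1.le
      rw [Real.norm_eq_abs, abs_of_nonneg (by positivity)]
      rw [div_le_div_iff₀ (by nlinarith) (by positivity)]
      nlinarith [mul_nonneg (mul_nonneg (mul_nonneg hc0.le hc0.le) hlog) (by positivity : (0:ℝ) ≤ x)]
  -- split
  have hsplit : ∫ x in Set.Ioi (1:ℝ), f x
      = (∫ x in Set.Ioc (1:ℝ) c, f x) + ∫ x in Set.Ioi c, f x := by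
    rw [← Set.Ioc_union_Ioi_eq_Ioi hc]
    exact setIntegral_union (Set.Ioc_disjoint_Ioi le_rfl) measurableSet_Ioi hfI1 hfI2
  rw [hsplit]
  have hb1 : ∫ x in Set.Ioc (1:ℝ) c, f x ≤ Real.log c ^ 2 / 2 := by
    rw [← hint1]
    apply setIntegral_mono_on hfI1 ?_ measurableSet_Ioc
    · intro x hx
      have hx1 : (1:ℝ) < x := hx.1
      have hlog : 0 ≤ Real.log x := Real.log_nonneg hx1.le
      rw [div_le_div_iff₀ (by nlinarith) (by linarith)]
      nlinarith [mul_nonneg hlog (by nlinarith : (0:ℝ) ≤ x * x)]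
    · have hcont : ContinuousOn (fun x => Real.log x / x) (Set.Icc 1 c) := by
        apply ContinuousOn.div
        · exact Real.continuousOn_log.mono (by intro x hx; simp; linarith [hx.1])
        · exact continuousOn_id
        · intro x hx
          have : (0:ℝ) < x := by linarith [hx.1]
          positivity
      exact hcont.integrableOn_Icc.mono_set Set.Ioc_subset_Icc_self
  have hb2 : ∫ x in Set.Ioi c, f x ≤ Real.log c + 1 := by
    rw [← hint2]
    apply setIntegral_mono_on hfI2 hI2 measurableSet_Ioi
    intro x hx
    have hx1 : (1:ℝ) < x := lt_of_le_of_lt hc hx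
    have hlog : 0 ≤ Real.log x := Real.log_nonneg hx1.le
    rw [div_le_div_iff₀ (by nlinarith) (by positivity)]
    nlinarith [mul_nonneg (mul_nonneg (mul_nonneg hc0.le hc0.le) hlog) (by positivity : (0:ℝ) ≤ x)]
  linarith
end
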